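/- arXiv:2010.04585 — 3 statements merged into one kernel-verified Lean document; each statement's English description precedes it below -/
import Mathlib

section
/- The robustness of Buscemi nonlocality is convex: if M¹ = {M¹_ab} and M² = {M²_ab} are distributed measurements in R_BN (with the same dimensions and outcome numbers) and 0 ≤ p ≤ 1, then the family M = {p·M¹_ab + (1−p)·M²_ab} is a distributed measurement in R_BN and RoBN(M) ≤ p·RoBN(M¹) + (1−p)·RoBN(M²). -/
open Matrix BigOperators Kronecker ComplexOrder

noncomputable section

/-- Square complex matrices of size `n`. -/
abbrev Mat (n : ℕ) : Type := Matrix (Fin n) (Fin n) ℂ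

/-- Bipartite complex matrices on `ℂ^m ⊗ ℂ^n`. -/
abbrev BMat (m n : ℕ) : Type := Matrix (Fin m × Fin n) (Fin m × Fin n) ℂ

/-- A density matrix: positive semidefinite with unit trace. -/
def IsDensity {n : Type} [Fintype n] (ρ : Matrix n n ℂ) : Prop :=
  ρ.PosSemidef ∧ ρ.trace = 1

/-- A POVM: a finite family of positive semidefinite matrices summing to the identity. -/
def IsPOVM {ι n : Type} [Fintype ι] [Fintype n] [DecidableEq n]
    (M : ι → Matrix n n ℂ) : Prop :=
  (∀ i, (M i).PosSemidef) ∧ ∑ i, M i = 1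

/-- A separable bipartite operator: a finite convex combination of products of
density matrices. -/
def SepState {dA dB : ℕ} (ρ : BMat dA dB) : Prop :=
  ∃ (n : ℕ) (p : Fin n → ℝ) (ρA : Fin n → Mat dA) (ρB : Fin n → Mat dB),
    (∀ l, 0 ≤ p l) ∧ (∑ l, p l = 1) ∧
    (∀ l, IsDensity (ρA l)) ∧ (∀ l, IsDensity (ρB l)) ∧
    ρ = ∑ l, (p l : ℂ) • (ρA l ⊗ₖ ρB l)

/-- The element `tr_{A'B'}[(Ma ⊗ Mb)(1^A ⊗ ρ^{A'B'} ⊗ 1^B)]` of a distributed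
measurement (written out entrywise, after the canonical reordering of tensor factors). -/
def distMeas {dA dA' dB' dB : ℕ}
    (Ma : Matrix (Fin dA × Fin dA') (Fin dA × Fin dA') ℂ)
    (Mb : Matrix (Fin dB' × Fin dB) (Fin dB' × Fin dB) ℂ)
    (ρ : BMat dA' dB') : BMat dA dB :=
  Matrix.of fun pq rs =>
    ∑ k : Fin dA', ∑ l : Fin dB', ∑ k' : Fin dA', ∑ l' : Fin dB',
      Ma (pq.1, k) (rs.1, k') * Mb (l, pq.2) (l', rs.2) * ρ (k', l') (k, l)

/-- Membership in `R_BN`: the family arises from local POVMs and a shared state. -/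
def MemRBN {dA dB oA oB : ℕ} (M : Fin oA → Fin oB → BMat dA dB) : Prop :=
  ∃ (dA' dB' : ℕ)
    (Ma : Fin oA → Matrix (Fin dA × Fin dA') (Fin dA × Fin dA') ℂ)
    (Mb : Fin oB → Matrix (Fin dB' × Fin dB) (Fin dB' × Fin dB) ℂ)
    (ρ : BMat dA' dB'),
    IsPOVM Ma ∧ IsPOVM Mb ∧ IsDensity ρ ∧
    ∀ a b, M a b = distMeas (Ma a) (Mb b) ρ

/-- Membership in `F_BN`: the family arises from local POVMs and a separable shared state. -/
def MemFBN {dA dB oA oB : ℕ} (M : Fin oA → Fin oB → BMat dA dB) : Prop :=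
  ∃ (dA' dB' : ℕ)
    (Ma : Fin oA → Matrix (Fin dA × Fin dA') (Fin dA × Fin dA') ℂ)
    (Mb : Fin oB → Matrix (Fin dB' × Fin dB) (Fin dB' × Fin dB) ℂ)
    (ρ : BMat dA' dB'),
    IsPOVM Ma ∧ IsPOVM Mb ∧ IsDensity ρ ∧ SepState ρ ∧
    ∀ a b, M a b = distMeas (Ma a) (Mb b) ρ

/-- Robustness of Buscemi nonlocality. -/
def RoBN {dA dB oA oB : ℕ} (M : Fin oA → Fin oB → BMat dA dB) : ℝ :=
  sInf { r : ℝ | 0 ≤ r ∧ ∃ (N O : Fin oA → Fin oB → BMat dA dB),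
    MemRBN N ∧ MemFBN O ∧
    ∀ a b, M a b + (r : ℂ) • N a b = ((1 + r : ℝ) : ℂ) • O a b }

/-- Quantum simulation of a distributed measurement: shared randomness, local
pre-processing channels (given by Kraus operators) in the Heisenberg picture,
and classical post-processing of outcomes. -/
def Simulates {dA dB oA oB oA' oB' : ℕ}
    (M : Fin oA → Fin oB → BMat dA dB)
    (M' : Fin oA' → Fin oB' → BMat dA dB) : Prop :=
  ∃ (nL : ℕ) (pL : Fin nL → ℝ)
    (pA : Fin oA' → Fin oA → Fin nL → ℝ)
    (pB : Fin oB' → Fin oB → Fin nL → ℝ)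
    (kE : Fin nL → ℕ) (KE : (l : Fin nL) → Fin (kE l) → Mat dA)
    (kN : Fin nL → ℕ) (KN : (l : Fin nL) → Fin (kN l) → Mat dB),
    (∀ l, 0 ≤ pL l) ∧ (∑ l, pL l = 1) ∧
    (∀ a i l, 0 ≤ pA a i l) ∧ (∀ i l, ∑ a, pA a i l = 1) ∧
    (∀ b j l, 0 ≤ pB b j l) ∧ (∀ j l, ∑ b, pB b j l = 1) ∧
    (∀ l, ∑ s : Fin (kE l), (KE l s)ᴴ * KE l s = 1) ∧
    (∀ l, ∑ t : Fin (kN l), (KN l t)ᴴ * KN l t = 1) ∧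
    ∀ a b, M' a b = ∑ l : Fin nL, ∑ i : Fin oA, ∑ j : Fin oB,
      ((pL l * pA a i l * pB b j l : ℝ) : ℂ) •
        ∑ s : Fin (kE l), ∑ t : Fin (kN l),
          (KE l s ⊗ₖ KN l t)ᴴ * M i j * (KE l s ⊗ₖ KN l t)

/-- An ensemble of bipartite states: a probability distribution together with
density matrices. -/
def IsEnsemble {dA dB oA oB : ℕ} (p : Fin oA → Fin oB → ℝ)
    (σ : Fin oA → Fin oB → BMat dA dB) : Prop :=
  (∀ x y, 0 ≤ p x y) ∧ (∑ x, ∑ y, p x y = 1) ∧ ∀ x y, IsDensity (σ x y)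

/-- Guessing probability in distributed state discrimination with a distributed
measurement `M`. -/
def pDSD {dA dB oA oB : ℕ} (p : Fin oA → Fin oB → ℝ)
    (σ : Fin oA → Fin oB → BMat dA dB)
    (M : Fin oA → Fin oB → BMat dA dB) : ℝ :=
  sSup { v : ℝ | ∃ N : Fin oA → Fin oB → BMat dA dB, Simulates M N ∧
    v = ∑ x : Fin oA, ∑ y : Fin oB, p x y * ((N x y * σ x y).trace).re }

/-- Classical value of distributed state discrimination. -/
def pDSDc {dA dB oA oB : ℕ} (p : Fin oA → Fin oB → ℝ)
    (σ : Fin oA → Fin oB → BMat dA dB) : ℝ :=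
  sSup { v : ℝ | ∃ N : Fin oA → Fin oB → BMat dA dB, MemFBN N ∧ v = pDSD p σ N }

/-- The subchannel `ω ↦ tr_{AA'}[(Ma ⊗ 1^{B'})(ω ⊗ ρ^{A'B'})]` of a teleportation
instrument (written out entrywise). -/
def telep {dA dA' dB' : ℕ}
    (Ma : Matrix (Fin dA × Fin dA') (Fin dA × Fin dA') ℂ)
    (ρ : BMat dA' dB') (ω : Mat dA) : Mat dB' :=
  Matrix.of fun l l' =>
    ∑ i : Fin dA, ∑ k : Fin dA', ∑ i' : Fin dA, ∑ k' : Fin dA',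
      Ma (i, k) (i', k') * ω i' i * ρ (k', l) (k, l')

/-- Membership in `R_T`: the instrument is a teleportation instrument. -/
def MemRT {dA dB' oA : ℕ} (Λ : Fin oA → Mat dA → Mat dB') : Prop :=
  ∃ (dA' : ℕ) (Ma : Fin oA → Matrix (Fin dA × Fin dA') (Fin dA × Fin dA') ℂ)
    (ρ : BMat dA' dB'),
    IsPOVM Ma ∧ IsDensity ρ ∧ ∀ a ω, Λ a ω = telep (Ma a) ρ ω

/-- Membership in `F_T`: a teleportation instrument realizable with a separable state. -/
def MemFT {dA dB' oA : ℕ} (Λ : Fin oA → Mat dA → Mat dB') : Prop :=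
  ∃ (dA' : ℕ) (Ma : Fin oA → Matrix (Fin dA × Fin dA') (Fin dA × Fin dA') ℂ)
    (ρ : BMat dA' dB'),
    IsPOVM Ma ∧ IsDensity ρ ∧ SepState ρ ∧ ∀ a ω, Λ a ω = telep (Ma a) ρ ω

/-- Robustness of teleportation. -/
def RoT {dA dB' oA : ℕ} (Λ : Fin oA → Mat dA → Mat dB') : ℝ :=
  sInf { r : ℝ | 0 ≤ r ∧ ∃ (Ω Γ : Fin oA → Mat dA → Mat dB'),
    MemRT Ω ∧ MemFT Γ ∧
    ∀ a ω, Λ a ω + (r : ℂ) • Ω a ω = ((1 + r : ℝ) : ℂ) • Γ a ω }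

/-- Quantum simulation of a teleportation instrument:
`Φ_a = Σ_{i,λ} p(λ) p(a|i,λ) E_λ ∘ Λ_i ∘ N_λ` with channels given by Kraus operators. -/
def SimInstr {dA dB' o o' : ℕ} (Λ : Fin o → Mat dA → Mat dB')
    (Φ : Fin o' → Mat dA → Mat dB') : Prop :=
  ∃ (nL : ℕ) (pL : Fin nL → ℝ) (pA : Fin o' → Fin o → Fin nL → ℝ)
    (kN : Fin nL → ℕ) (KN : (l : Fin nL) → Fin (kN l) → Mat dA)
    (kE : Fin nL → ℕ) (KE : (l : Fin nL) → Fin (kE l) → Mat dB'),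
    (∀ l, 0 ≤ pL l) ∧ (∑ l, pL l = 1) ∧
    (∀ a i l, 0 ≤ pA a i l) ∧ (∀ i l, ∑ a, pA a i l = 1) ∧
    (∀ l, ∑ s : Fin (kN l), (KN l s)ᴴ * KN l s = 1) ∧
    (∀ l, ∑ t : Fin (kE l), (KE l t)ᴴ * KE l t = 1) ∧
    ∀ a ω, Φ a ω = ∑ l : Fin nL, ∑ i : Fin o,
      ((pL l * pA a i l : ℝ) : ℂ) •
        ∑ t : Fin (kE l),
          KE l t * Λ i (∑ s : Fin (kN l), KN l s * ω * (KN l s)ᴴ) * (KE l t)ᴴ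

/-- `(Φ ⊗ id^B)[σ]` for a map `Φ` acting on the first tensor factor. -/
def appFst {dA dB' dB : ℕ} (Φ : Mat dA → Mat dB') (σ : BMat dA dB) : BMat dB' dB :=
  Matrix.of fun pq rs =>
    Φ (Matrix.of fun i i' => σ (i, pq.2) (i', rs.2)) pq.1 rs.1

/-- Guessing probability in teleportation-assisted state discrimination with
instrument `Λ`. -/
def pTSD {dA dB' o dB oA oB : ℕ} (p : Fin oA → Fin oB → ℝ)
    (σ : Fin oA → Fin oB → BMat dA dB)
    (Λ : Fin o → Mat dA → Mat dB') : ℝ :=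
  sSup { v : ℝ | ∃ (Mb : Fin oB → Matrix (Fin dB' × Fin dB) (Fin dB' × Fin dB) ℂ)
      (Φ : Fin oA → Mat dA → Mat dB'),
    IsPOVM Mb ∧ SimInstr Λ Φ ∧
    v = ∑ x : Fin oA, ∑ y : Fin oB,
      p x y * ((Mb y * appFst (Φ x) (σ x y)).trace).re }

/-- Classical value of teleportation-assisted state discrimination. -/
def pTSDc (dB' : ℕ) {dA dB oA oB : ℕ} (p : Fin oA → Fin oB → ℝ)
    (σ : Fin oA → Fin oB → BMat dA dB) : ℝ :=
  sSup { v : ℝ | ∃ (o' : ℕ) (F : Fin o' → Mat dA → Mat dB'),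
    MemFT F ∧ v = pTSD p σ F }

/-- Generalized robustness of entanglement. -/
def RoE {dA dB : ℕ} (ρ : BMat dA dB) : ℝ :=
  sInf { r : ℝ | 0 ≤ r ∧ ∃ (η σ : BMat dA dB),
    IsDensity η ∧ IsDensity σ ∧ SepState σ ∧
    ρ + (r : ℂ) • η = ((1 + r : ℝ) : ℂ) • σ }

/-- Guessing probability in entanglement-assisted state discrimination with
shared state `ρ`. -/
def pESD {dA dB oA oB dA' dB' : ℕ} (p : Fin oA → Fin oB → ℝ)
    (σ : Fin oA → Fin oB → BMat dA dB) (ρ : BMat dA' dB') : ℝ :=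
  sSup { v : ℝ | ∃ (Ma : Fin oA → Matrix (Fin dA × Fin dA') (Fin dA × Fin dA') ℂ)
      (Mb : Fin oB → Matrix (Fin dB' × Fin dB) (Fin dB' × Fin dB) ℂ),
    IsPOVM Ma ∧ IsPOVM Mb ∧
    v = ∑ x : Fin oA, ∑ y : Fin oB,
      p x y * ((distMeas (Ma x) (Mb y) ρ * σ x y).trace).re }

/-- Classical value of entanglement-assisted state discrimination. -/
def pESDc {dA dB oA oB : ℕ} (p : Fin oA → Fin oB → ℝ)
    (σ : Fin oA → Fin oB → BMat dA dB) : ℝ :=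
  sSup { v : ℝ | ∃ (dA' dB' : ℕ) (ρ : BMat dA' dB'),
    IsDensity ρ ∧ SepState ρ ∧ v = pESD p σ ρ }

/-- Partial trace over the second tensor factor. -/
def ptraceSnd {m n : Type} [Fintype n] (M : Matrix (m × n) (m × n) ℂ) : Matrix m m ℂ :=
  Matrix.of fun i j => ∑ k : n, M (i, k) (j, k)

/-- Partial trace over the first tensor factor. -/
def ptraceFst {m n : Type} [Fintype m] (M : Matrix (m × n) (m × n) ℂ) : Matrix n n ℂ :=
  Matrix.of fun i j => ∑ k : m, M (k, i) (k, j)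

/-- Average score in a general no-signalling game with scoring function `V`. -/
def pV {dA dB oA oB nX nY : ℕ} (p : Fin nX → Fin nY → ℝ)
    (σ : Fin nX → Fin nY → BMat dA dB)
    (V : Fin oA → Fin oB → Fin nX → Fin nY → ℝ)
    (M : Fin oA → Fin oB → BMat dA dB) : ℝ :=
  ∑ a : Fin oA, ∑ b : Fin oB, ∑ x : Fin nX, ∑ y : Fin nY,
    p x y * ((M a b * σ x y).trace).re * V a b x y

/-- Min-accessible information of a channel, with base-2 logarithms. -/
def IaccMin {dA dB : ℕ} {out : Type} [Fintype out] [DecidableEq out]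
    (N : BMat dA dB → Matrix out out ℂ) : ℝ :=
  sSup { v : ℝ | ∃ (n m : ℕ) (p : Fin n → ℝ) (σ : Fin n → BMat dA dB)
      (D : Fin m → Matrix out out ℂ),
    (∀ x, 0 ≤ p x) ∧ (∑ x, p x = 1) ∧ (∀ x, IsDensity (σ x)) ∧ IsPOVM D ∧
    v = Real.logb 2 (∑ g : Fin m, ⨆ x : Fin n, p x * ((N (σ x) * D g).trace).re)
      - Real.logb 2 (⨆ x : Fin n, p x) }
section RobnConvexAux
set_option linter.unusedSectionVars false

open Function

variable {α β : Type} [Fintype α] [Fintype β] [DecidableEq α] [DecidableEq β]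

/-- Embedding matrix of a map `f`. -/
def injMat (f : α → β) : Matrix β α ℂ := Matrix.of fun b a => if b = f a then 1 else 0

/-- Conjugation of a matrix by an embedding. -/
def cg (f : α → β) (M : Matrix α α ℂ) : Matrix β β ℂ := injMat f * M * (injMat f)ᴴ

lemma cg_apply (f : α → β) (M : Matrix α α ℂ) (b b' : β) :
    cg f M b b' = ∑ a : α, ∑ a' : α, if b = f a ∧ b' = f a' then M a a' else 0 := by
  simp only [cg, Matrix.mul_apply, Matrix.conjTranspose_apply, injMat, Matrix.of_apply,
    Finset.sum_mul]
  rw [Finset.sum_comm]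
  refine Finset.sum_congr rfl fun a _ => Finset.sum_congr rfl fun a' _ => ?_
  by_cases h1 : b = f a <;> by_cases h2 : b' = f a' <;> simp [h1, h2]

lemma cg_apply_of_ne_left {f : α → β} {b : β} (hb : ∀ a, b ≠ f a) (M : Matrix α α ℂ)
    (b' : β) : cg f M b b' = 0 := by
  rw [cg_apply]
  exact Finset.sum_eq_zero fun a _ => Finset.sum_eq_zero fun a' _ => by simp [hb a]

lemma cg_apply_of_ne_right {f : α → β} {b' : β} (hb : ∀ a, b' ≠ f a) (M : Matrix α α ℂ)
    (b : β) : cg f M b b' = 0 := by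
  rw [cg_apply]
  exact Finset.sum_eq_zero fun a _ => Finset.sum_eq_zero fun a' _ => by simp [hb a']

lemma cg_apply_apply {f : α → β} (hf : Injective f) (M : Matrix α α ℂ) (a a' : α) :
    cg f M (f a) (f a') = M a a' := by
  rw [cg_apply]
  simp [hf.eq_iff, ite_and, Finset.sum_ite_eq]

lemma cg_one_apply_left {f : α → β} (hf : Injective f) (a : α) (b' : β) :
    cg f (1 : Matrix α α ℂ) (f a) b' = if b' = f a then 1 else 0 := by
  rw [cg_apply, Finset.sum_eq_single a]
  · rw [Finset.sum_eq_single a]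
    · simp [Matrix.one_apply]
    · intro x _ hx
      simp [Matrix.one_apply, Ne.symm hx]
    · simp
  · intro x _ hx
    refine Finset.sum_eq_zero fun a' _ => ?_
    have : ¬ f a = f x := fun h => hx (hf h).symm
    simp [this]
  · simp

lemma conjTranspose_injMat_mul {f : α → β} (hf : Injective f) :
    (injMat f)ᴴ * injMat f = (1 : Matrix α α ℂ) := by
  ext a a'
  simp only [Matrix.mul_apply, Matrix.conjTranspose_apply, injMat, Matrix.of_apply]
  rw [Finset.sum_eq_single (f a)]
  · by_cases h : a = a' <;> simp [Matrix.one_apply, h, hf.eq_iff, eq_comm]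
  · intro b _ hb
    simp [hb]
  · simp

lemma trace_cg {f : α → β} (hf : Injective f) (M : Matrix α α ℂ) :
    (cg f M).trace = M.trace := by
  rw [cg, Matrix.trace_mul_cycle, conjTranspose_injMat_mul hf, Matrix.one_mul]

lemma posSemidef_cg {M : Matrix α α ℂ} (hM : M.PosSemidef) (f : α → β) :
    (cg f M).PosSemidef := hM.mul_mul_conjTranspose_same _

lemma isDensity_cg {f : α → β} (hf : Injective f) {M : Matrix α α ℂ}
    (hM : IsDensity M) : IsDensity (cg f M) :=
  ⟨posSemidef_cg hM.1 f, by rw [trace_cg hf, hM.2]⟩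

lemma cg_smul (f : α → β) (c : ℂ) (M : Matrix α α ℂ) : cg f (c • M) = c • cg f M := by
  simp [cg, Matrix.smul_mul, Matrix.mul_smul]

lemma cg_sum {ι : Type} (s : Finset ι) (f : α → β) (M : ι → Matrix α α ℂ) :
    cg f (∑ i ∈ s, M i) = ∑ i ∈ s, cg f (M i) := by
  simp [cg, Matrix.mul_sum, Matrix.sum_mul]

lemma posSemidef_add {M N : Matrix α α ℂ} (hM : M.PosSemidef) (hN : N.PosSemidef) :
    (M + N).PosSemidef := by
  exact hM.add hN

lemma posSemidef_real_smul {M : Matrix α α ℂ} (hM : M.PosSemidef) {q : ℝ} (hq : 0 ≤ q) :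
    ((q : ℂ) • M).PosSemidef := by
  refine ⟨?_, fun x => ?_⟩
  · unfold Matrix.IsHermitian
    rw [Matrix.conjTranspose_smul, hM.1.eq]
    congr 1
    simp [Complex.star_def, Complex.conj_ofReal]
  · exact (hM.smul (Complex.zero_le_real.2 hq)).2 x

lemma cg_one_add_cg_one {α₁ α₂ : Type} [Fintype α₁] [Fintype α₂] [DecidableEq α₁]
    [DecidableEq α₂] {f₁ : α₁ → β} {f₂ : α₂ → β} (h₁ : Injective f₁) (h₂ : Injective f₂)
    (hd : ∀ a₁ a₂, f₁ a₁ ≠ f₂ a₂)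
    (hc : ∀ b, (∃ a, b = f₁ a) ∨ (∃ a, b = f₂ a)) :
    cg f₁ (1 : Matrix α₁ α₁ ℂ) + cg f₂ (1 : Matrix α₂ α₂ ℂ) = 1 := by
  ext b b'
  rcases hc b with ⟨a, rfl⟩ | ⟨a, rfl⟩
  · rw [Matrix.add_apply, cg_one_apply_left h₁,
      cg_apply_of_ne_left (fun a₂ => hd a a₂) _ b']
    simp [Matrix.one_apply, eq_comm]
  · rw [Matrix.add_apply, cg_one_apply_left h₂,
      cg_apply_of_ne_left (fun a₁ h => hd a₁ a h.symm) _ b']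
    simp [Matrix.one_apply, eq_comm]

lemma isPOVM_cg_add {ι α₁ α₂ : Type} [Fintype ι] [Fintype α₁] [Fintype α₂]
    [DecidableEq α₁] [DecidableEq α₂]
    {N₁ : ι → Matrix α₁ α₁ ℂ} {N₂ : ι → Matrix α₂ α₂ ℂ}
    {f₁ : α₁ → β} {f₂ : α₂ → β} (h₁ : Injective f₁) (h₂ : Injective f₂)
    (hd : ∀ a₁ a₂, f₁ a₁ ≠ f₂ a₂)
    (hc : ∀ b, (∃ a, b = f₁ a) ∨ (∃ a, b = f₂ a))
    (hP₁ : IsPOVM N₁) (hP₂ : IsPOVM N₂) :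
    IsPOVM (fun i => cg f₁ (N₁ i) + cg f₂ (N₂ i)) := by
  constructor
  · exact fun i => posSemidef_add (posSemidef_cg (hP₁.1 i) f₁) (posSemidef_cg (hP₂.1 i) f₂)
  · rw [Finset.sum_add_distrib, ← cg_sum, ← cg_sum, hP₁.2, hP₂.2]
    exact cg_one_add_cg_one h₁ h₂ hd hc

end RobnConvexAux
section RobnConvexAux2
set_option linter.unusedSectionVars false

open Function

lemma injMat_prodMap {α β α' β' : Type} [Fintype α] [Fintype β] [Fintype α'] [Fintype β']
    [DecidableEq α] [DecidableEq β] [DecidableEq α'] [DecidableEq β']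
    (g : α → β) (h : α' → β') :
    injMat (Prod.map g h) = injMat g ⊗ₖ injMat h := by
  ext ⟨b₁, b₂⟩ ⟨a₁, a₂⟩
  simp only [injMat, Matrix.of_apply, Matrix.kroneckerMap_apply, Prod.map_apply, Prod.mk.injEq]
  by_cases h1 : b₁ = g a₁ <;> by_cases h2 : b₂ = h a₂ <;> simp [h1, h2]

lemma kron_conjTranspose {α β γ δ : Type} (A : Matrix α β ℂ) (B : Matrix γ δ ℂ) :
    (A ⊗ₖ B)ᴴ = Aᴴ ⊗ₖ Bᴴ := by
  ext ⟨b₁, b₂⟩ ⟨a₁, a₂⟩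
  simp [Matrix.conjTranspose_apply, Matrix.kroneckerMap_apply, star_mul']

lemma cg_kron {α β α' β' : Type} [Fintype α] [Fintype β] [Fintype α'] [Fintype β']
    [DecidableEq α] [DecidableEq β] [DecidableEq α'] [DecidableEq β']
    (g : α → β) (h : α' → β') (A : Matrix α α ℂ) (B : Matrix α' α' ℂ) :
    cg (Prod.map g h) (A ⊗ₖ B) = cg g A ⊗ₖ cg h B := by
  rw [cg, injMat_prodMap, kron_conjTranspose, ← Matrix.mul_kronecker_mul,
    ← Matrix.mul_kronecker_mul]
  rfl

lemma fin_castAdd_injective (m n : ℕ) :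
    Injective (Fin.castAdd n : Fin m → Fin (m + n)) := by
  intro a b h
  have : (a : ℕ) = (b : ℕ) := by simpa [Fin.ext_iff] using h
  exact Fin.ext this

lemma fin_natAdd_injective (m n : ℕ) :
    Injective (Fin.natAdd m : Fin n → Fin (m + n)) := by
  intro a b h
  have : m + (a : ℕ) = m + (b : ℕ) := by simpa [Fin.ext_iff] using h
  exact Fin.ext (by omega)

lemma fin_castAdd_ne_natAdd {m n : ℕ} (x : Fin m) (y : Fin n) :
    Fin.castAdd n x ≠ Fin.natAdd m y := by
  have := x.isLt
  intro hEq
  have h2 := congrArg Fin.val hEq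
  simp only [Fin.coe_castAdd, Fin.coe_natAdd] at h2
  omega

lemma fin_cover {m n : ℕ} (j : Fin (m + n)) :
    (∃ a, j = Fin.castAdd n a) ∨ (∃ a, j = Fin.natAdd m a) := by
  by_cases h : (j : ℕ) < m
  · exact Or.inl ⟨⟨j, h⟩, Fin.ext (by simp)⟩
  · have hj := j.isLt
    exact Or.inr ⟨⟨(j : ℕ) - m, by omega⟩, Fin.ext (by simp; omega)⟩

/-- `distMeas` as a single sum. -/
lemma distMeas_apply {dA dA' dB' dB : ℕ}
    (Ma : Matrix (Fin dA × Fin dA') (Fin dA × Fin dA') ℂ)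
    (Mb : Matrix (Fin dB' × Fin dB) (Fin dB' × Fin dB) ℂ)
    (ρ : BMat dA' dB') (pq rs : Fin dA × Fin dB) :
    distMeas Ma Mb ρ pq rs = ∑ x : (Fin dA' × Fin dB') × (Fin dA' × Fin dB'),
      Ma (pq.1, x.1.1) (rs.1, x.2.1) * Mb (x.1.2, pq.2) (x.2.2, rs.2) * ρ x.2 x.1 := by
  simp only [distMeas, Matrix.of_apply, Fintype.sum_prod_type]

lemma sum_reindex {α β : Type} [Fintype α] [Fintype β] [DecidableEq β] {f : α → β}
    (hf : Injective f) (F : β → ℂ) (h0 : ∀ b, (∀ a, b ≠ f a) → F b = 0) :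
    ∑ b, F b = ∑ a, F (f a) := by
  classical
  rw [← Finset.sum_image (f := F) (g := f) (s := Finset.univ)
    (fun a _ a' _ h => hf h)]
  refine (Finset.sum_subset (Finset.subset_univ _) fun b _ hb => h0 b fun a hba => hb ?_).symm
  exact Finset.mem_image.2 ⟨a, Finset.mem_univ a, hba.symm⟩

end RobnConvexAux2
section RobnConvexAux3
set_option linter.unusedSectionVars false

open Function

lemma distMeas_cg_eq {dA dB eA eB EA EB : ℕ}
    {g : Fin eA → Fin EA} {h : Fin eB → Fin EB} (hg : Injective g) (hh : Injective h)
    (Ma : Matrix (Fin dA × Fin eA) (Fin dA × Fin eA) ℂ)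
    (Mb : Matrix (Fin eB × Fin dB) (Fin eB × Fin dB) ℂ)
    (ρ : BMat eA eB) :
    distMeas (cg (Prod.map id g) Ma) (cg (Prod.map h id) Mb) (cg (Prod.map g h) ρ)
      = distMeas Ma Mb ρ := by
  have hgh : Injective (Prod.map g h) := hg.prodMap hh
  ext pq rs
  rw [distMeas_apply, distMeas_apply,
    sum_reindex (f := Prod.map (Prod.map g h) (Prod.map g h)) (hgh.prodMap hgh)]
  · refine Finset.sum_congr rfl fun x _ => ?_
    have e1 := cg_apply_apply (injective_id.prodMap hg) Ma (pq.1, x.1.1) (rs.1, x.2.1)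
    have e2 := cg_apply_apply (hh.prodMap injective_id) Mb (x.1.2, pq.2) (x.2.2, rs.2)
    have e3 := cg_apply_apply hgh ρ x.2 x.1
    simp only [Prod.map_apply, Prod.map_fst, Prod.map_snd, id_eq] at e1 e2 e3 ⊢
    rw [e1, e2, e3]
  · intro b hb
    have hsplit : (∀ u, b.1 ≠ Prod.map g h u) ∨ (∀ u, b.2 ≠ Prod.map g h u) := by
      by_contra hcon
      push_neg at hcon
      obtain ⟨⟨u, hu⟩, ⟨v, hv⟩⟩ := hcon
      exact hb (u, v) (Prod.ext hu hv)
    rcases hsplit with h' | h'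
    · rw [cg_apply_of_ne_right h', mul_zero]
    · rw [cg_apply_of_ne_left h', mul_zero]

lemma distMeas_cg_zeroA {dA dB eA eB eA' eB' EA EB : ℕ}
    {g : Fin eA → Fin EA} {h : Fin eB → Fin EB}
    {g' : Fin eA' → Fin EA} {h' : Fin eB' → Fin EB}
    (hd : ∀ x y, g x ≠ g' y)
    (Ma : Matrix (Fin dA × Fin eA) (Fin dA × Fin eA) ℂ)
    (Mb : Matrix (Fin eB × Fin dB) (Fin eB × Fin dB) ℂ)
    (ρ : BMat eA' eB') :
    distMeas (cg (Prod.map id g) Ma) (cg (Prod.map h id) Mb) (cg (Prod.map g' h') ρ)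
      = 0 := by
  ext pq rs
  rw [distMeas_apply, Matrix.zero_apply]
  refine Finset.sum_eq_zero fun x _ => ?_
  by_cases hk : ∃ k0, x.1.1 = g k0
  · obtain ⟨k0, hk0⟩ := hk
    have hne : ∀ u : Fin eA' × Fin eB', x.1 ≠ Prod.map g' h' u := by
      intro u hu
      exact hd k0 u.1 (by rw [← hk0]; exact congrArg Prod.fst hu)
    rw [cg_apply_of_ne_right hne, mul_zero]
  · push_neg at hk
    have hne : ∀ u : Fin dA × Fin eA, (pq.1, x.1.1) ≠ Prod.map id g u := by
      intro u hu
      exact hk u.2 (congrArg Prod.snd hu)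
    rw [cg_apply_of_ne_left hne, zero_mul, zero_mul]

lemma distMeas_cg_zeroB {dA dB eA eB eA' eB' EA EB : ℕ}
    {g : Fin eA → Fin EA} {h : Fin eB → Fin EB}
    {g' : Fin eA' → Fin EA} {h' : Fin eB' → Fin EB}
    (hd : ∀ x y, h x ≠ h' y)
    (Ma : Matrix (Fin dA × Fin eA) (Fin dA × Fin eA) ℂ)
    (Mb : Matrix (Fin eB × Fin dB) (Fin eB × Fin dB) ℂ)
    (ρ : BMat eA' eB') :
    distMeas (cg (Prod.map id g) Ma) (cg (Prod.map h id) Mb) (cg (Prod.map g' h') ρ)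
      = 0 := by
  ext pq rs
  rw [distMeas_apply, Matrix.zero_apply]
  refine Finset.sum_eq_zero fun x _ => ?_
  by_cases hl : ∃ l0, x.1.2 = h l0
  · obtain ⟨l0, hl0⟩ := hl
    have hne : ∀ u : Fin eA' × Fin eB', x.1 ≠ Prod.map g' h' u := by
      intro u hu
      exact hd l0 u.2 (by rw [← hl0]; exact congrArg Prod.snd hu)
    rw [cg_apply_of_ne_right hne, mul_zero]
  · push_neg at hl
    have hne : ∀ u : Fin eB × Fin dB, (x.1.2, pq.2) ≠ Prod.map h id u := by
      intro u hu
      exact hl u.1 (congrArg Prod.fst hu)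
    rw [cg_apply_of_ne_left hne, mul_zero, zero_mul]

lemma distMeas_addA {dA dA' dB' dB : ℕ}
    (Ma Ma' : Matrix (Fin dA × Fin dA') (Fin dA × Fin dA') ℂ)
    (Mb : Matrix (Fin dB' × Fin dB) (Fin dB' × Fin dB) ℂ) (ρ : BMat dA' dB') :
    distMeas (Ma + Ma') Mb ρ = distMeas Ma Mb ρ + distMeas Ma' Mb ρ := by
  ext pq rs
  simp only [distMeas_apply, Matrix.add_apply, add_mul, Finset.sum_add_distrib]

lemma distMeas_addB {dA dA' dB' dB : ℕ}
    (Ma : Matrix (Fin dA × Fin dA') (Fin dA × Fin dA') ℂ)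
    (Mb Mb' : Matrix (Fin dB' × Fin dB) (Fin dB' × Fin dB) ℂ) (ρ : BMat dA' dB') :
    distMeas Ma (Mb + Mb') ρ = distMeas Ma Mb ρ + distMeas Ma Mb' ρ := by
  ext pq rs
  simp only [distMeas_apply, Matrix.add_apply, mul_add, add_mul, Finset.sum_add_distrib]

lemma distMeas_state_comb {dA dA' dB' dB : ℕ}
    (Ma : Matrix (Fin dA × Fin dA') (Fin dA × Fin dA') ℂ)
    (Mb : Matrix (Fin dB' × Fin dB) (Fin dB' × Fin dB) ℂ)
    (c₁ c₂ : ℂ) (ρ₁ ρ₂ : BMat dA' dB') :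
    distMeas Ma Mb (c₁ • ρ₁ + c₂ • ρ₂)
      = c₁ • distMeas Ma Mb ρ₁ + c₂ • distMeas Ma Mb ρ₂ := by
  ext pq rs
  simp only [distMeas_apply, Matrix.add_apply, Matrix.smul_apply, smul_eq_mul,
    Finset.mul_sum, ← Finset.sum_add_distrib, mul_add]
  exact Finset.sum_congr rfl fun x _ => by ring

end RobnConvexAux3
section RobnConvexAux4
set_option linter.unusedSectionVars false

open Function

variable {dA dB oA oB eA₁ eB₁ eA₂ eB₂ : ℕ}

lemma povmA_partition :
    (∀ b : Fin dA × Fin (eA₁ + eA₂),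
      (∃ a, b = Prod.map id (Fin.castAdd eA₂) a) ∨ (∃ a, b = Prod.map id (Fin.natAdd eA₁) a)) := by
  rintro ⟨i, j⟩
  rcases fin_cover j with ⟨a, rfl⟩ | ⟨a, rfl⟩
  · exact Or.inl ⟨(i, a), rfl⟩
  · exact Or.inr ⟨(i, a), rfl⟩

lemma povmB_partition :
    (∀ b : Fin (eB₁ + eB₂) × Fin dB,
      (∃ a, b = Prod.map (Fin.castAdd eB₂) id a) ∨ (∃ a, b = Prod.map (Fin.natAdd eB₁) id a)) := by
  rintro ⟨j, i⟩
  rcases fin_cover j with ⟨a, rfl⟩ | ⟨a, rfl⟩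
  · exact Or.inl ⟨(a, i), rfl⟩
  · exact Or.inr ⟨(a, i), rfl⟩

lemma conv_core
    (Ma₁ : Fin oA → Matrix (Fin dA × Fin eA₁) (Fin dA × Fin eA₁) ℂ)
    (Mb₁ : Fin oB → Matrix (Fin eB₁ × Fin dB) (Fin eB₁ × Fin dB) ℂ)
    (ρ₁ : BMat eA₁ eB₁)
    (Ma₂ : Fin oA → Matrix (Fin dA × Fin eA₂) (Fin dA × Fin eA₂) ℂ)
    (Mb₂ : Fin oB → Matrix (Fin eB₂ × Fin dB) (Fin eB₂ × Fin dB) ℂ)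
    (ρ₂ : BMat eA₂ eB₂)
    (hPa₁ : IsPOVM Ma₁) (hPb₁ : IsPOVM Mb₁) (hρ₁ : IsDensity ρ₁)
    (hPa₂ : IsPOVM Ma₂) (hPb₂ : IsPOVM Mb₂) (hρ₂ : IsDensity ρ₂)
    (q : ℝ) (hq0 : 0 ≤ q) (hq1 : q ≤ 1) :
    IsPOVM (fun a => cg (Prod.map id (Fin.castAdd eA₂)) (Ma₁ a)
        + cg (Prod.map id (Fin.natAdd eA₁)) (Ma₂ a)) ∧
    IsPOVM (fun b => cg (Prod.map (Fin.castAdd eB₂) id) (Mb₁ b)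
        + cg (Prod.map (Fin.natAdd eB₁) id) (Mb₂ b)) ∧
    IsDensity ((q : ℂ) • cg (Prod.map (Fin.castAdd eA₂) (Fin.castAdd eB₂)) ρ₁
        + ((1 - q : ℝ) : ℂ) • cg (Prod.map (Fin.natAdd eA₁) (Fin.natAdd eB₁)) ρ₂) ∧
    ∀ a b, distMeas
        (cg (Prod.map id (Fin.castAdd eA₂)) (Ma₁ a)
          + cg (Prod.map id (Fin.natAdd eA₁)) (Ma₂ a))
        (cg (Prod.map (Fin.castAdd eB₂) id) (Mb₁ b)
          + cg (Prod.map (Fin.natAdd eB₁) id) (Mb₂ b))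
        ((q : ℂ) • cg (Prod.map (Fin.castAdd eA₂) (Fin.castAdd eB₂)) ρ₁
          + ((1 - q : ℝ) : ℂ) • cg (Prod.map (Fin.natAdd eA₁) (Fin.natAdd eB₁)) ρ₂)
      = (q : ℂ) • distMeas (Ma₁ a) (Mb₁ b) ρ₁
          + ((1 - q : ℝ) : ℂ) • distMeas (Ma₂ a) (Mb₂ b) ρ₂ := by
  have hcA := fin_castAdd_injective eA₁ eA₂
  have hnA := fin_natAdd_injective eA₁ eA₂
  have hcB := fin_castAdd_injective eB₁ eB₂
  have hnB := fin_natAdd_injective eB₁ eB₂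
  have hdA : ∀ (x : Fin eA₁) (y : Fin eA₂), Fin.castAdd eA₂ x ≠ Fin.natAdd eA₁ y :=
    fun x y => fin_castAdd_ne_natAdd x y
  have hdB : ∀ (x : Fin eB₁) (y : Fin eB₂), Fin.castAdd eB₂ x ≠ Fin.natAdd eB₁ y :=
    fun x y => fin_castAdd_ne_natAdd x y
  refine ⟨?_, ?_, ?_, ?_⟩
  · refine isPOVM_cg_add (injective_id.prodMap hcA) (injective_id.prodMap hnA)
      ?_ povmA_partition hPa₁ hPa₂
    rintro ⟨i, x⟩ ⟨i', y⟩ hEq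
    exact hdA x y (congrArg Prod.snd hEq)
  · refine isPOVM_cg_add (hcB.prodMap injective_id) (hnB.prodMap injective_id)
      ?_ povmB_partition hPb₁ hPb₂
    rintro ⟨x, i⟩ ⟨y, i'⟩ hEq
    exact hdB x y (congrArg Prod.fst hEq)
  · constructor
    · exact posSemidef_add
        (posSemidef_real_smul (posSemidef_cg hρ₁.1 _) hq0)
        (posSemidef_real_smul (posSemidef_cg hρ₂.1 _) (by linarith))
    · rw [Matrix.trace_add, Matrix.trace_smul, Matrix.trace_smul,
        trace_cg (hcA.prodMap hcB), trace_cg (hnA.prodMap hnB), hρ₁.2, hρ₂.2]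
      push_cast
      simp only [smul_eq_mul]
      ring
  · intro a b
    rw [distMeas_addA, distMeas_addB, distMeas_addB,
      distMeas_state_comb, distMeas_state_comb, distMeas_state_comb, distMeas_state_comb,
      distMeas_cg_eq hcA hcB, distMeas_cg_eq hnA hnB,
      distMeas_cg_zeroA (g := Fin.castAdd eA₂) (g' := Fin.natAdd eA₁) hdA,
      distMeas_cg_zeroB (h := Fin.natAdd eB₁) (h' := Fin.castAdd eB₂)
        (fun x y => (hdB y x).symm),
      distMeas_cg_zeroA (g := Fin.castAdd eA₂) (g' := Fin.natAdd eA₁) hdA,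
      distMeas_cg_zeroA (g := Fin.natAdd eA₁) (g' := Fin.castAdd eA₂)
        (fun x y => (hdA y x).symm),
      distMeas_cg_zeroB (h := Fin.castAdd eB₂) (h' := Fin.natAdd eB₁) hdB,
      distMeas_cg_zeroA (g := Fin.natAdd eA₁) (g' := Fin.castAdd eA₂)
        (fun x y => (hdA y x).symm)]
    simp only [smul_zero, add_zero, zero_add]

end RobnConvexAux4
section RobnConvexAux5
set_option linter.unusedSectionVars false

open Function

lemma memRBN_conv {dA dB oA oB : ℕ} {M₁ M₂ : Fin oA → Fin oB → BMat dA dB}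
    (h₁ : MemRBN M₁) (h₂ : MemRBN M₂) {q : ℝ} (hq0 : 0 ≤ q) (hq1 : q ≤ 1) :
    MemRBN (fun a b => (q : ℂ) • M₁ a b + ((1 - q : ℝ) : ℂ) • M₂ a b) := by
  obtain ⟨eA₁, eB₁, Ma₁, Mb₁, ρ₁, hPa₁, hPb₁, hρ₁, hM₁⟩ := h₁
  obtain ⟨eA₂, eB₂, Ma₂, Mb₂, ρ₂, hPa₂, hPb₂, hρ₂, hM₂⟩ := h₂
  obtain ⟨hA, hB, hD, hE⟩ :=
    conv_core Ma₁ Mb₁ ρ₁ Ma₂ Mb₂ ρ₂ hPa₁ hPb₁ hρ₁ hPa₂ hPb₂ hρ₂ q hq0 hq1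
  exact ⟨eA₁ + eA₂, eB₁ + eB₂, _, _, _, hA, hB, hD,
    fun a b => by simp only [hM₁, hM₂]; exact (hE a b).symm⟩

lemma sepState_conv {eA₁ eB₁ eA₂ eB₂ : ℕ} {ρ₁ : BMat eA₁ eB₁} {ρ₂ : BMat eA₂ eB₂}
    (hS₁ : SepState ρ₁) (hS₂ : SepState ρ₂) {q : ℝ} (hq0 : 0 ≤ q) (hq1 : q ≤ 1) :
    SepState ((q : ℂ) • cg (Prod.map (Fin.castAdd eA₂) (Fin.castAdd eB₂)) ρ₁
      + ((1 - q : ℝ) : ℂ) • cg (Prod.map (Fin.natAdd eA₁) (Fin.natAdd eB₁)) ρ₂) := by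
  obtain ⟨n₁, p₁, ρA₁, ρB₁, hp₁0, hp₁s, hdA₁, hdB₁, he₁⟩ := hS₁
  obtain ⟨n₂, p₂, ρA₂, ρB₂, hp₂0, hp₂s, hdA₂, hdB₂, he₂⟩ := hS₂
  refine ⟨n₁ + n₂,
    Fin.addCases (fun l => q * p₁ l) (fun l => (1 - q) * p₂ l),
    Fin.addCases (motive := fun _ => Mat (eA₁ + eA₂))
      (fun l => cg (Fin.castAdd eA₂) (ρA₁ l)) (fun l => cg (Fin.natAdd eA₁) (ρA₂ l)),
    Fin.addCases (motive := fun _ => Mat (eB₁ + eB₂))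
      (fun l => cg (Fin.castAdd eB₂) (ρB₁ l)) (fun l => cg (Fin.natAdd eB₁) (ρB₂ l)),
    ?_, ?_, ?_, ?_, ?_⟩
  · intro l
    rcases fin_cover l with ⟨i, rfl⟩ | ⟨i, rfl⟩
    · simp only [Fin.addCases_left]
      exact mul_nonneg hq0 (hp₁0 i)
    · simp only [Fin.addCases_right]
      exact mul_nonneg (by linarith) (hp₂0 i)
  · rw [Fin.sum_univ_add]
    simp only [Fin.addCases_left, Fin.addCases_right, ← Finset.mul_sum, hp₁s, hp₂s]
    ring
  · intro l
    rcases fin_cover l with ⟨i, rfl⟩ | ⟨i, rfl⟩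
    · simp only [Fin.addCases_left]
      exact isDensity_cg (fin_castAdd_injective eA₁ eA₂) (hdA₁ i)
    · simp only [Fin.addCases_right]
      exact isDensity_cg (fin_natAdd_injective eA₁ eA₂) (hdA₂ i)
  · intro l
    rcases fin_cover l with ⟨i, rfl⟩ | ⟨i, rfl⟩
    · simp only [Fin.addCases_left]
      exact isDensity_cg (fin_castAdd_injective eB₁ eB₂) (hdB₁ i)
    · simp only [Fin.addCases_right]
      exact isDensity_cg (fin_natAdd_injective eB₁ eB₂) (hdB₂ i)
  · rw [Fin.sum_univ_add]
    simp only [Fin.addCases_left, Fin.addCases_right]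
    rw [he₁, he₂, cg_sum, cg_sum]
    rw [Finset.smul_sum, Finset.smul_sum]
    congr 1
    · refine Finset.sum_congr rfl fun l _ => ?_
      rw [cg_smul, ← cg_kron, smul_smul]
      push_cast
      ring_nf
    · refine Finset.sum_congr rfl fun l _ => ?_
      rw [cg_smul, ← cg_kron, smul_smul]
      push_cast
      ring_nf

lemma memFBN_conv {dA dB oA oB : ℕ} {M₁ M₂ : Fin oA → Fin oB → BMat dA dB}
    (h₁ : MemFBN M₁) (h₂ : MemFBN M₂) {q : ℝ} (hq0 : 0 ≤ q) (hq1 : q ≤ 1) :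
    MemFBN (fun a b => (q : ℂ) • M₁ a b + ((1 - q : ℝ) : ℂ) • M₂ a b) := by
  obtain ⟨eA₁, eB₁, Ma₁, Mb₁, ρ₁, hPa₁, hPb₁, hρ₁, hS₁, hM₁⟩ := h₁
  obtain ⟨eA₂, eB₂, Ma₂, Mb₂, ρ₂, hPa₂, hPb₂, hρ₂, hS₂, hM₂⟩ := h₂
  obtain ⟨hA, hB, hD, hE⟩ :=
    conv_core Ma₁ Mb₁ ρ₁ Ma₂ Mb₂ ρ₂ hPa₁ hPb₁ hρ₁ hPa₂ hPb₂ hρ₂ q hq0 hq1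
  exact ⟨eA₁ + eA₂, eB₁ + eB₂, _, _, _, hA, hB, hD, sepState_conv hS₁ hS₂ hq0 hq1,
    fun a b => by simp only [hM₁, hM₂]; exact (hE a b).symm⟩

end RobnConvexAux5
section RobnConvexAux6
set_option linter.unusedSectionVars false

open Function

def robnSet {dA dB oA oB : ℕ} (M : Fin oA → Fin oB → BMat dA dB) : Set ℝ :=
  { r : ℝ | 0 ≤ r ∧ ∃ (N O : Fin oA → Fin oB → BMat dA dB),
    MemRBN N ∧ MemFBN O ∧
    ∀ a b, M a b + (r : ℂ) • N a b = ((1 + r : ℝ) : ℂ) • O a b }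

lemma RoBN_eq {dA dB oA oB : ℕ} (M : Fin oA → Fin oB → BMat dA dB) :
    RoBN M = sInf (robnSet M) := rfl

lemma mem_robnSet_mix {dA dB oA oB : ℕ} {M₁ M₂ : Fin oA → Fin oB → BMat dA dB}
    {p r₁ r₂ : ℝ} (hp0 : 0 ≤ p) (hp1 : p ≤ 1)
    (h₁ : r₁ ∈ robnSet M₁) (h₂ : r₂ ∈ robnSet M₂) :
    p * r₁ + (1 - p) * r₂ ∈
      robnSet (fun a b => (p : ℂ) • M₁ a b + ((1 - p : ℝ) : ℂ) • M₂ a b) := by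
  obtain ⟨hr₁0, N₁, O₁, hN₁, hO₁, hE₁⟩ := h₁
  obtain ⟨hr₂0, N₂, O₂, hN₂, hO₂, hE₂⟩ := h₂
  have hp1' : (0:ℝ) ≤ 1 - p := by linarith
  have hr0 : 0 ≤ p * r₁ + (1 - p) * r₂ :=
    add_nonneg (mul_nonneg hp0 hr₁0) (mul_nonneg hp1' hr₂0)
  by_cases hr : p * r₁ + (1 - p) * r₂ = 0
  · have h1 : p * r₁ = 0 := by nlinarith [mul_nonneg hp0 hr₁0, mul_nonneg hp1' hr₂0]
    have h2 : (1 - p) * r₂ = 0 := by linarith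
    refine ⟨hr0, N₁, fun a b => (p : ℂ) • O₁ a b + ((1 - p : ℝ) : ℂ) • O₂ a b, hN₁,
      memFBN_conv hO₁ hO₂ hp0 hp1, fun a b => ?_⟩
    ext ij kl
    have e₁ := congrFun (congrFun (hE₁ a b) ij) kl
    have e₂ := congrFun (congrFun (hE₂ a b) ij) kl
    simp only [Matrix.add_apply, Matrix.smul_apply, smul_eq_mul] at e₁ e₂ ⊢
    have h1c : (p : ℂ) * (r₁ : ℂ) = 0 := by exact_mod_cast congrArg Complex.ofReal h1
    have h2c : ((1 : ℂ) - p) * (r₂ : ℂ) = 0 := by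
      have := congrArg Complex.ofReal h2
      push_cast at this
      linear_combination this
    rw [hr]
    push_cast at e₁ e₂ ⊢
    have f₁ : (p : ℂ) * M₁ a b ij kl = (p : ℂ) * O₁ a b ij kl := by
      linear_combination (p : ℂ) * e₁ + (O₁ a b ij kl - N₁ a b ij kl) * h1c
    have f₂ : ((1 : ℂ) - p) * M₂ a b ij kl = ((1 : ℂ) - p) * O₂ a b ij kl := by
      linear_combination ((1 : ℂ) - p) * e₂ + (O₂ a b ij kl - N₂ a b ij kl) * h2c
    linear_combination f₁ + f₂
  · have hrpos : 0 < p * r₁ + (1 - p) * r₂ := lt_of_le_of_ne hr0 (Ne.symm hr)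
    set r := p * r₁ + (1 - p) * r₂ with hrdef
    set s := p * r₁ / r with hsdef
    have hs0 : 0 ≤ s := div_nonneg (mul_nonneg hp0 hr₁0) hr0
    have hs1 : s ≤ 1 := (div_le_one hrpos).2 (by nlinarith)
    have hs1' : r * s = p * r₁ := by
      rw [hsdef]
      field_simp
    have hs2 : r * (1 - s) = (1 - p) * r₂ := by
      rw [mul_sub, mul_one, hs1', hrdef]
      ring
    have hr1pos : (0:ℝ) < 1 + r := by linarith
    set t := p * (1 + r₁) / (1 + r) with htdef
    have ht0 : 0 ≤ t := div_nonneg (mul_nonneg hp0 (by linarith)) hr1pos.le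
    have ht1 : t ≤ 1 := (div_le_one hr1pos).2 (by nlinarith)
    have ht1' : (1 + r) * t = p * (1 + r₁) := by
      rw [htdef]
      field_simp
    have ht2 : (1 + r) * (1 - t) = (1 - p) * (1 + r₂) := by
      rw [mul_sub, mul_one, ht1', hrdef]
      ring
    refine ⟨hr0, fun a b => (s : ℂ) • N₁ a b + ((1 - s : ℝ) : ℂ) • N₂ a b,
      fun a b => (t : ℂ) • O₁ a b + ((1 - t : ℝ) : ℂ) • O₂ a b,
      memRBN_conv hN₁ hN₂ hs0 hs1, memFBN_conv hO₁ hO₂ ht0 ht1, fun a b => ?_⟩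
    ext ij kl
    have e₁ := congrFun (congrFun (hE₁ a b) ij) kl
    have e₂ := congrFun (congrFun (hE₂ a b) ij) kl
    simp only [Matrix.add_apply, Matrix.smul_apply, smul_eq_mul] at e₁ e₂ ⊢
    push_cast at e₁ e₂ ⊢
    have hs1'c : (r : ℂ) * (s : ℂ) = (p : ℂ) * (r₁ : ℂ) := by exact_mod_cast congrArg Complex.ofReal hs1'
    have hs2c : (r : ℂ) * (1 - (s : ℂ)) = (1 - (p : ℂ)) * (r₂ : ℂ) := by
      have := congrArg Complex.ofReal hs2
      push_cast at this
      linear_combination this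
    have ht1'c : (1 + (r : ℂ)) * (t : ℂ) = (p : ℂ) * (1 + (r₁ : ℂ)) := by
      have := congrArg Complex.ofReal ht1'
      push_cast at this
      linear_combination this
    have ht2c : (1 + (r : ℂ)) * (1 - (t : ℂ)) = (1 - (p : ℂ)) * (1 + (r₂ : ℂ)) := by
      have := congrArg Complex.ofReal ht2
      push_cast at this
      linear_combination this
    linear_combination (p : ℂ) * e₁ + ((1 : ℂ) - p) * e₂ + N₁ a b ij kl * hs1'c
      + N₂ a b ij kl * hs2c - O₁ a b ij kl * ht1'c - O₂ a b ij kl * ht2c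

end RobnConvexAux6
section RobnConvexAux7
set_option linter.unusedSectionVars false

open Function

lemma mem_robnSet_unmix₁ {dA dB oA oB : ℕ} {M₁ M₂ : Fin oA → Fin oB → BMat dA dB}
    (hM₂ : MemRBN M₂) {p r : ℝ} (hp0 : 0 < p) (hp1 : p < 1)
    (h : r ∈ robnSet (fun a b => (p : ℂ) • M₁ a b + ((1 - p : ℝ) : ℂ) • M₂ a b)) :
    (1 - p + r) / p ∈ robnSet M₁ := by
  obtain ⟨hr0, N, O, hN, hO, hE⟩ := h
  set t := 1 - p + r with htdef
  have ht : 0 < t := by linarith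
  set s := (1 - p) / t with hsdef
  have hs0 : 0 ≤ s := div_nonneg (by linarith) ht.le
  have hs1 : s ≤ 1 := (div_le_one ht).2 (by linarith)
  have hs1' : t * s = 1 - p := by rw [hsdef]; field_simp
  have hs2 : t * (1 - s) = r := by rw [mul_sub, mul_one, hs1', htdef]; ring
  have hpne : (p : ℂ) ≠ 0 := by exact_mod_cast hp0.ne'
  refine ⟨div_nonneg ht.le hp0.le,
    fun a b => (s : ℂ) • M₂ a b + ((1 - s : ℝ) : ℂ) • N a b, O,
    memRBN_conv hM₂ hN hs0 hs1, hO, fun a b => ?_⟩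
  ext ij kl
  have e := congrFun (congrFun (hE a b) ij) kl
  simp only [Matrix.add_apply, Matrix.smul_apply, smul_eq_mul] at e ⊢
  push_cast at e ⊢
  have hs1'c : (t : ℂ) * (s : ℂ) = 1 - (p : ℂ) := by
    have := congrArg Complex.ofReal hs1'
    push_cast at this
    linear_combination this
  have hs2c : (t : ℂ) * (1 - (s : ℂ)) = (r : ℂ) := by
    have := congrArg Complex.ofReal hs2
    push_cast at this
    linear_combination this
  have htc : (t : ℂ) = 1 - (p : ℂ) + (r : ℂ) := by
    have := congrArg Complex.ofReal htdef
    push_cast at this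
    linear_combination this
  have hpp : (p : ℂ) * (p : ℂ)⁻¹ = 1 := mul_inv_cancel₀ hpne
  linear_combination (p : ℂ)⁻¹ * e + (O a b ij kl - M₁ a b ij kl) * hpp
    + (p : ℂ)⁻¹ * M₂ a b ij kl * hs1'c + (p : ℂ)⁻¹ * N a b ij kl * hs2c
    - (p : ℂ)⁻¹ * O a b ij kl * htc

lemma mem_robnSet_unmix₂ {dA dB oA oB : ℕ} {M₁ M₂ : Fin oA → Fin oB → BMat dA dB}
    (hM₁ : MemRBN M₁) {p r : ℝ} (hp0 : 0 < p) (hp1 : p < 1)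
    (h : r ∈ robnSet (fun a b => (p : ℂ) • M₁ a b + ((1 - p : ℝ) : ℂ) • M₂ a b)) :
    (p + r) / (1 - p) ∈ robnSet M₂ := by
  obtain ⟨hr0, N, O, hN, hO, hE⟩ := h
  set t := p + r with htdef
  have ht : 0 < t := by linarith
  set s := p / t with hsdef
  have hs0 : 0 ≤ s := div_nonneg hp0.le ht.le
  have hs1 : s ≤ 1 := (div_le_one ht).2 (by linarith)
  have hs1' : t * s = p := by rw [hsdef]; field_simp
  have hs2 : t * (1 - s) = r := by rw [mul_sub, mul_one, hs1', htdef]; ring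
  have hpne : (1 : ℂ) - (p : ℂ) ≠ 0 := by
    intro hcon
    have : ((1 - p : ℝ) : ℂ) = 0 := by push_cast; linear_combination hcon
    have : (1 - p : ℝ) = 0 := by exact_mod_cast this
    linarith
  refine ⟨div_nonneg ht.le (by linarith),
    fun a b => (s : ℂ) • M₁ a b + ((1 - s : ℝ) : ℂ) • N a b, O,
    memRBN_conv hM₁ hN hs0 hs1, hO, fun a b => ?_⟩
  ext ij kl
  have e := congrFun (congrFun (hE a b) ij) kl
  simp only [Matrix.add_apply, Matrix.smul_apply, smul_eq_mul] at e ⊢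
  push_cast at e ⊢
  have hs1'c : (t : ℂ) * (s : ℂ) = (p : ℂ) := by exact_mod_cast congrArg Complex.ofReal hs1'
  have hs2c : (t : ℂ) * (1 - (s : ℂ)) = (r : ℂ) := by
    have := congrArg Complex.ofReal hs2
    push_cast at this
    linear_combination this
  have htc : (t : ℂ) = (p : ℂ) + (r : ℂ) := by
    have := congrArg Complex.ofReal htdef
    push_cast at this
    linear_combination this
  have hpp : ((1 : ℂ) - p) * ((1 : ℂ) - p)⁻¹ = 1 := mul_inv_cancel₀ hpne
  linear_combination ((1 : ℂ) - p)⁻¹ * e + (O a b ij kl - M₂ a b ij kl) * hpp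
    + ((1 : ℂ) - p)⁻¹ * M₁ a b ij kl * hs1'c + ((1 : ℂ) - p)⁻¹ * N a b ij kl * hs2c
    - ((1 : ℂ) - p)⁻¹ * O a b ij kl * htc

end RobnConvexAux7
/-- RoBN is convex: a probabilistic mixture of two distributed
measurements is a distributed measurement, and its RoBN is at most the mixture of
the RoBNs. -/
theorem robn_convex {dA dB oA oB : ℕ} (M₁ M₂ : Fin oA → Fin oB → BMat dA dB)
    (h₁ : MemRBN M₁) (h₂ : MemRBN M₂) (p : ℝ) (hp0 : 0 ≤ p) (hp1 : p ≤ 1) :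
    MemRBN (fun a b => (p : ℂ) • M₁ a b + ((1 - p : ℝ) : ℂ) • M₂ a b) ∧
    RoBN (fun a b => (p : ℂ) • M₁ a b + ((1 - p : ℝ) : ℂ) • M₂ a b) ≤
      p * RoBN M₁ + (1 - p) * RoBN M₂ := by
  refine ⟨memRBN_conv h₁ h₂ hp0 hp1, ?_⟩
  rcases eq_or_lt_of_le hp0 with hp | hp
  · -- p = 0
    have hfun : (fun a b => (p : ℂ) • M₁ a b + ((1 - p : ℝ) : ℂ) • M₂ a b) = M₂ := by
      funext a b
      rw [← hp]
      push_cast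
      simp
    rw [hfun, ← hp]
    norm_num
  · rcases eq_or_lt_of_le hp1 with hp' | hp'
    · -- p = 1
      have hfun : (fun a b => (p : ℂ) • M₁ a b + ((1 - p : ℝ) : ℂ) • M₂ a b) = M₁ := by
        funext a b
        rw [hp']
        push_cast
        simp
      rw [hfun, hp']
      norm_num
    · -- 0 < p < 1
      have hb : BddBelow (robnSet
          (fun a b => (p : ℂ) • M₁ a b + ((1 - p : ℝ) : ℂ) • M₂ a b)) :=
        ⟨0, fun x hx => hx.1⟩
      have h1nn : 0 ≤ RoBN M₁ := Real.sInf_nonneg fun x hx => hx.1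
      have h2nn : 0 ≤ RoBN M₂ := Real.sInf_nonneg fun x hx => hx.1
      by_cases hS₁ : (robnSet M₁).Nonempty
      · by_cases hS₂ : (robnSet M₂).Nonempty
        · refine le_of_forall_pos_le_add fun ε hε => ?_
          obtain ⟨r₁, hr₁m, hr₁⟩ := Real.lt_sInf_add_pos hS₁ hε
          obtain ⟨r₂, hr₂m, hr₂⟩ := Real.lt_sInf_add_pos hS₂ hε
          have hle : RoBN (fun a b => (p : ℂ) • M₁ a b + ((1 - p : ℝ) : ℂ) • M₂ a b)
              ≤ p * r₁ + (1 - p) * r₂ := by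
            rw [RoBN_eq]
            exact csInf_le hb (mem_robnSet_mix hp0 hp1 hr₁m hr₂m)
          have k₁ : p * r₁ ≤ p * (sInf (robnSet M₁) + ε) :=
            mul_le_mul_of_nonneg_left hr₁.le hp0
          have k₂ : (1 - p) * r₂ ≤ (1 - p) * (sInf (robnSet M₂) + ε) :=
            mul_le_mul_of_nonneg_left hr₂.le (by linarith)
          rw [RoBN_eq M₁, RoBN_eq M₂]
          nlinarith [hle, k₁, k₂]
        · have hempty : robnSet
              (fun a b => (p : ℂ) • M₁ a b + ((1 - p : ℝ) : ℂ) • M₂ a b) = ∅ := by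
            rw [Set.eq_empty_iff_forall_notMem]
            intro r hr
            exact hS₂ ⟨_, mem_robnSet_unmix₂ h₁ hp hp' hr⟩
          rw [RoBN_eq, hempty, Real.sInf_empty]
          nlinarith [mul_nonneg hp0 h1nn, mul_nonneg (show (0:ℝ) ≤ 1 - p by linarith) h2nn]
      · have hempty : robnSet
            (fun a b => (p : ℂ) • M₁ a b + ((1 - p : ℝ) : ℂ) • M₂ a b) = ∅ := by
          rw [Set.eq_empty_iff_forall_notMem]
          intro r hr
          exact hS₁ ⟨_, mem_robnSet_unmix₁ h₂ hp hp' hr⟩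
        rw [RoBN_eq, hempty, Real.sInf_empty]
        nlinarith [mul_nonneg hp0 h1nn, mul_nonneg (show (0:ℝ) ≤ 1 - p by linarith) h2nn]
end
end

section
/- The robustness of Buscemi nonlocality is monotone under quantum simulation: if M and M' are distributed measurements in R_BN and M ≻_q M' (M' can be quantum-simulated from M), then RoBN(M') ≤ RoBN(M). -/
open Matrix BigOperators Kronecker ComplexOrder

noncomputable section

namespace RobnAux

open Matrix Kronecker ComplexOrder

/-- Rectangular partial trace over the second factor. -/
def ptr {m m' n : Type} [Fintype n] (M : Matrix (m × n) (m' × n) ℂ) : Matrix m m' ℂ :=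
  Matrix.of fun i j => ∑ k : n, M (i, k) (j, k)

lemma kron_conjT {l m n p : Type} (A : Matrix l m ℂ) (B : Matrix n p ℂ) :
    (A ⊗ₖ B)ᴴ = Aᴴ ⊗ₖ Bᴴ := by
  ext ⟨i, j⟩ ⟨k, l⟩
  simp [conjTranspose_apply, Matrix.kroneckerMap_apply]

lemma ptr_kron_one_mul {m₂ m m' n : Type} [Fintype m] [Fintype n] [DecidableEq n]
    (C : Matrix m₂ m ℂ) (Z : Matrix (m × n) (m' × n) ℂ) :
    ptr ((C ⊗ₖ (1 : Matrix n n ℂ)) * Z) = C * ptr Z := by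
  ext i j
  simp only [ptr, Matrix.of_apply, Matrix.mul_apply, Matrix.kroneckerMap_apply,
    Matrix.one_apply, Fintype.sum_prod_type, mul_ite, mul_zero, mul_one, ite_mul, zero_mul,
    Finset.sum_ite_eq, Finset.sum_ite_eq', Finset.mem_univ, if_true, Finset.mul_sum]
  rw [Finset.sum_comm]

lemma ptr_mul_kron_one {m m' m₂ n : Type} [Fintype m'] [Fintype n] [DecidableEq n]
    (Z : Matrix (m × n) (m' × n) ℂ) (C : Matrix m' m₂ ℂ) :
    ptr (Z * (C ⊗ₖ (1 : Matrix n n ℂ))) = ptr Z * C := by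
  ext i j
  simp only [ptr, Matrix.of_apply, Matrix.mul_apply, Matrix.kroneckerMap_apply,
    Matrix.one_apply, Fintype.sum_prod_type, mul_ite, mul_zero, mul_one, ite_mul, zero_mul,
    Finset.sum_ite_eq, Finset.sum_ite_eq', Finset.mem_univ, if_true, Finset.sum_mul]
  rw [Finset.sum_comm]

lemma ptr_cyclic {m n n' : Type} [Fintype m] [Fintype n] [Fintype n'] [DecidableEq m]
    (C : Matrix n' n ℂ) (Z : Matrix (m × n) (m × n') ℂ) :
    ptr (((1 : Matrix m m ℂ) ⊗ₖ C) * Z) = ptr (Z * ((1 : Matrix m m ℂ) ⊗ₖ C)) := by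
  ext i j
  simp only [ptr, Matrix.of_apply, Matrix.mul_apply, Matrix.kroneckerMap_apply,
    Matrix.one_apply, Fintype.sum_prod_type, mul_ite, mul_zero, mul_one, ite_mul, zero_mul,
    one_mul]
  conv_lhs => enter [2, x]; rw [Finset.sum_comm]
  conv_rhs => enter [2, x]; rw [Finset.sum_comm]
  simp only [Finset.sum_ite_eq, Finset.sum_ite_eq', Finset.mem_univ, if_true]
  rw [Finset.sum_comm]
  exact Finset.sum_congr rfl fun _ _ => Finset.sum_congr rfl fun _ _ => mul_comm _ _

/-- The reordering `(A ⊗ B) ⊗ (A' ⊗ B') ≃ (A ⊗ A') ⊗ (B' ⊗ B)`. -/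
def reord (dA dB dA' dB' : ℕ) :
    ((Fin dA × Fin dB) × (Fin dA' × Fin dB')) ≃ ((Fin dA × Fin dA') × (Fin dB' × Fin dB)) where
  toFun := fun x => ((x.1.1, x.2.1), (x.2.2, x.1.2))
  invFun := fun y => ((y.1.1, y.2.2), (y.1.2, y.2.1))
  left_inv := fun _ => rfl
  right_inv := fun _ => rfl

lemma distMeas_eq_ptr {dA dA' dB' dB : ℕ}
    (Ma : Matrix (Fin dA × Fin dA') (Fin dA × Fin dA') ℂ)
    (Mb : Matrix (Fin dB' × Fin dB) (Fin dB' × Fin dB) ℂ)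
    (ρ : BMat dA' dB') :
    distMeas Ma Mb ρ = ptr ((Ma ⊗ₖ Mb).submatrix (reord dA dB dA' dB') (reord dA dB dA' dB') *
      ((1 : Matrix (Fin dA × Fin dB) (Fin dA × Fin dB) ℂ) ⊗ₖ ρ)) := by
  ext ⟨p, q⟩ ⟨r, s⟩
  simp only [distMeas, ptr, Matrix.of_apply, Matrix.mul_apply, Matrix.submatrix_apply,
    reord, Equiv.coe_fn_mk, Matrix.kroneckerMap_apply, Matrix.one_apply,
    Fintype.sum_prod_type, mul_ite, mul_zero, mul_one, ite_mul, zero_mul,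
    Finset.sum_ite_eq, Finset.sum_ite_eq', Finset.mem_univ, if_true, Prod.mk.injEq, ite_and,
    Finset.sum_ite_irrel, Finset.sum_const_zero, one_mul]

lemma submatrix_kron_kron {dA dB dA' dB' dA₂ dB₂ : ℕ}
    (K : Mat dA) (L : Mat dB)
    (P : Matrix (Fin dA') (Fin dA₂) ℂ) (Q : Matrix (Fin dB') (Fin dB₂) ℂ) :
    ((K ⊗ₖ P) ⊗ₖ (Q ⊗ₖ L)).submatrix (reord dA dB dA' dB') (reord dA dB dA₂ dB₂)
      = (K ⊗ₖ L) ⊗ₖ (P ⊗ₖ Q) := by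
  ext ⟨⟨p, q⟩, ⟨k, l⟩⟩ ⟨⟨r, s⟩, ⟨k', l'⟩⟩
  simp [reord, Matrix.kroneckerMap_apply]
  ring

/-- Key conjugation identity for `distMeas`. -/
lemma distMeas_conj {dA dB dA' dB' dA₂ dB₂ : ℕ}
    (Ma : Matrix (Fin dA × Fin dA') (Fin dA × Fin dA') ℂ)
    (Mb : Matrix (Fin dB' × Fin dB) (Fin dB' × Fin dB) ℂ)
    (ρ₂ : BMat dA₂ dB₂) (K : Mat dA) (L : Mat dB)
    (P : Matrix (Fin dA') (Fin dA₂) ℂ) (Q : Matrix (Fin dB') (Fin dB₂) ℂ) :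
    distMeas ((K ⊗ₖ P)ᴴ * Ma * (K ⊗ₖ P)) ((Q ⊗ₖ L)ᴴ * Mb * (Q ⊗ₖ L)) ρ₂
      = (K ⊗ₖ L)ᴴ * distMeas Ma Mb ((P ⊗ₖ Q) * ρ₂ * (P ⊗ₖ Q)ᴴ) * (K ⊗ₖ L) := by
  classical
  have hsub : (((K ⊗ₖ P)ᴴ * Ma * (K ⊗ₖ P)) ⊗ₖ ((Q ⊗ₖ L)ᴴ * Mb * (Q ⊗ₖ L))).submatrix
        (reord dA dB dA₂ dB₂) (reord dA dB dA₂ dB₂)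
      = ((K ⊗ₖ L) ⊗ₖ (P ⊗ₖ Q))ᴴ *
          ((Ma ⊗ₖ Mb).submatrix (reord dA dB dA' dB') (reord dA dB dA' dB')) *
          ((K ⊗ₖ L) ⊗ₖ (P ⊗ₖ Q)) := by
    rw [Matrix.mul_kronecker_mul, Matrix.mul_kronecker_mul, ← kron_conjT,
      ← Matrix.submatrix_mul_equiv _ _ _ (reord dA dB dA' dB') _,
      ← Matrix.submatrix_mul_equiv _ _ _ (reord dA dB dA' dB') _,
      ← Matrix.conjTranspose_submatrix, submatrix_kron_kron]
  simp only [distMeas_eq_ptr, hsub]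
  set A := K ⊗ₖ L with hA
  set B := P ⊗ₖ Q with hB
  set T := (Ma ⊗ₖ Mb).submatrix (reord dA dB dA' dB') (reord dA dB dA' dB') with hT
  have h1 : (A ⊗ₖ B) = (A ⊗ₖ (1 : Matrix (Fin dA' × Fin dB') (Fin dA' × Fin dB') ℂ)) * ((1 : Matrix (Fin dA × Fin dB) (Fin dA × Fin dB) ℂ) ⊗ₖ B) := by
    rw [← Matrix.mul_kronecker_mul, Matrix.mul_one, Matrix.one_mul]
  have h2 : (A ⊗ₖ B)ᴴ = ((1 : Matrix (Fin dA × Fin dB) (Fin dA × Fin dB) ℂ) ⊗ₖ Bᴴ) * (Aᴴ ⊗ₖ (1 : Matrix (Fin dA' × Fin dB') (Fin dA' × Fin dB') ℂ)) := by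
    rw [kron_conjT, ← Matrix.mul_kronecker_mul, Matrix.mul_one, Matrix.one_mul]
  have comm1 : ((1 : Matrix (Fin dA × Fin dB) (Fin dA × Fin dB) ℂ) ⊗ₖ Bᴴ) * (Aᴴ ⊗ₖ (1 : Matrix (Fin dA' × Fin dB') (Fin dA' × Fin dB') ℂ)) = (Aᴴ ⊗ₖ (1 : Matrix (Fin dA₂ × Fin dB₂) (Fin dA₂ × Fin dB₂) ℂ)) * ((1 : Matrix (Fin dA × Fin dB) (Fin dA × Fin dB) ℂ) ⊗ₖ Bᴴ) := by
    rw [← Matrix.mul_kronecker_mul, ← Matrix.mul_kronecker_mul, Matrix.mul_one,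
      Matrix.one_mul, Matrix.mul_one, Matrix.one_mul]
  have comm2 : ((1 : Matrix (Fin dA × Fin dB) (Fin dA × Fin dB) ℂ) ⊗ₖ B) * ((1 : Matrix (Fin dA × Fin dB) (Fin dA × Fin dB) ℂ) ⊗ₖ ρ₂) = (1 : Matrix (Fin dA × Fin dB) (Fin dA × Fin dB) ℂ) ⊗ₖ (B * ρ₂) := by
    rw [← Matrix.mul_kronecker_mul, Matrix.one_mul]
  have comm3 : (A ⊗ₖ (1 : Matrix (Fin dA' × Fin dB') (Fin dA' × Fin dB') ℂ)) * ((1 : Matrix (Fin dA × Fin dB) (Fin dA × Fin dB) ℂ) ⊗ₖ (B * ρ₂)) = ((1 : Matrix (Fin dA × Fin dB) (Fin dA × Fin dB) ℂ) ⊗ₖ (B * ρ₂)) * (A ⊗ₖ (1 : Matrix (Fin dA₂ × Fin dB₂) (Fin dA₂ × Fin dB₂) ℂ)) := by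
    rw [← Matrix.mul_kronecker_mul, ← Matrix.mul_kronecker_mul, Matrix.mul_one,
      Matrix.one_mul, Matrix.mul_one, Matrix.one_mul]
  have comm4 : ((1 : Matrix (Fin dA × Fin dB) (Fin dA × Fin dB) ℂ) ⊗ₖ (B * ρ₂)) * ((1 : Matrix (Fin dA × Fin dB) (Fin dA × Fin dB) ℂ) ⊗ₖ Bᴴ) = (1 : Matrix (Fin dA × Fin dB) (Fin dA × Fin dB) ℂ) ⊗ₖ (B * ρ₂ * Bᴴ) := by
    rw [← Matrix.mul_kronecker_mul, Matrix.one_mul]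
  calc ptr ((A ⊗ₖ B)ᴴ * T * (A ⊗ₖ B) * ((1 : Matrix (Fin dA × Fin dB) (Fin dA × Fin dB) ℂ) ⊗ₖ ρ₂))
      = ptr ((Aᴴ ⊗ₖ (1 : Matrix (Fin dA₂ × Fin dB₂) (Fin dA₂ × Fin dB₂) ℂ)) * (((1 : Matrix (Fin dA × Fin dB) (Fin dA × Fin dB) ℂ) ⊗ₖ Bᴴ) * (T * (((1 : Matrix (Fin dA × Fin dB) (Fin dA × Fin dB) ℂ) ⊗ₖ (B * ρ₂)) * (A ⊗ₖ (1 : Matrix (Fin dA₂ × Fin dB₂) (Fin dA₂ × Fin dB₂) ℂ)))))) := by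
        rw [h2, h1]
        simp only [Matrix.mul_assoc]
        rw [comm2, comm3]
        rw [← Matrix.mul_assoc ((1 : Matrix (Fin dA × Fin dB) (Fin dA × Fin dB) ℂ) ⊗ₖ Bᴴ) (Aᴴ ⊗ₖ (1 : Matrix (Fin dA' × Fin dB') (Fin dA' × Fin dB') ℂ)), comm1, Matrix.mul_assoc]
    _ = Aᴴ * ptr ((((1 : Matrix (Fin dA × Fin dB) (Fin dA × Fin dB) ℂ) ⊗ₖ Bᴴ) * T) * ((1 : Matrix (Fin dA × Fin dB) (Fin dA × Fin dB) ℂ) ⊗ₖ (B * ρ₂))) * A := by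
        rw [ptr_kron_one_mul]
        simp only [← Matrix.mul_assoc]
        rw [ptr_mul_kron_one, ← Matrix.mul_assoc]
    _ = Aᴴ * ptr (T * ((1 : Matrix (Fin dA × Fin dB) (Fin dA × Fin dB) ℂ) ⊗ₖ (B * ρ₂ * Bᴴ))) * A := by
        rw [Matrix.mul_assoc (_ ⊗ₖ Bᴴ) T, ptr_cyclic, Matrix.mul_assoc T, comm4]

section Lin

variable {dA dA' dB' dB : ℕ}

lemma distMeas_zero_state (Ma : Matrix (Fin dA × Fin dA') (Fin dA × Fin dA') ℂ)
    (Mb : Matrix (Fin dB' × Fin dB) (Fin dB' × Fin dB) ℂ) :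
    distMeas Ma Mb (0 : BMat dA' dB') = 0 := by
  ext pq rs; simp [distMeas]

lemma distMeas_add_state (Ma : Matrix (Fin dA × Fin dA') (Fin dA × Fin dA') ℂ)
    (Mb : Matrix (Fin dB' × Fin dB) (Fin dB' × Fin dB) ℂ) (ρ₁ ρ₂ : BMat dA' dB') :
    distMeas Ma Mb (ρ₁ + ρ₂) = distMeas Ma Mb ρ₁ + distMeas Ma Mb ρ₂ := by
  ext pq rs
  simp [distMeas, mul_add, Finset.sum_add_distrib]

lemma distMeas_smul_state (Ma : Matrix (Fin dA × Fin dA') (Fin dA × Fin dA') ℂ)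
    (Mb : Matrix (Fin dB' × Fin dB) (Fin dB' × Fin dB) ℂ) (c : ℂ) (ρ : BMat dA' dB') :
    distMeas Ma Mb (c • ρ) = c • distMeas Ma Mb ρ := by
  ext pq rs
  simp only [distMeas, Matrix.of_apply, Matrix.smul_apply, smul_eq_mul, Finset.mul_sum]
  refine Finset.sum_congr rfl fun _ _ => Finset.sum_congr rfl fun _ _ =>
    Finset.sum_congr rfl fun _ _ => Finset.sum_congr rfl fun _ _ => by ring

lemma distMeas_zero_left (Mb : Matrix (Fin dB' × Fin dB) (Fin dB' × Fin dB) ℂ)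
    (ρ : BMat dA' dB') :
    distMeas (0 : Matrix (Fin dA × Fin dA') (Fin dA × Fin dA') ℂ) Mb ρ = 0 := by
  ext pq rs; simp [distMeas]

lemma distMeas_add_left (Ma₁ Ma₂ : Matrix (Fin dA × Fin dA') (Fin dA × Fin dA') ℂ)
    (Mb : Matrix (Fin dB' × Fin dB) (Fin dB' × Fin dB) ℂ) (ρ : BMat dA' dB') :
    distMeas (Ma₁ + Ma₂) Mb ρ = distMeas Ma₁ Mb ρ + distMeas Ma₂ Mb ρ := by
  ext pq rs
  simp [distMeas, add_mul, Finset.sum_add_distrib]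

lemma distMeas_smul_left (Ma : Matrix (Fin dA × Fin dA') (Fin dA × Fin dA') ℂ)
    (Mb : Matrix (Fin dB' × Fin dB) (Fin dB' × Fin dB) ℂ) (c : ℂ) (ρ : BMat dA' dB') :
    distMeas (c • Ma) Mb ρ = c • distMeas Ma Mb ρ := by
  ext pq rs
  simp only [distMeas, Matrix.of_apply, Matrix.smul_apply, smul_eq_mul, Finset.mul_sum]
  refine Finset.sum_congr rfl fun _ _ => Finset.sum_congr rfl fun _ _ =>
    Finset.sum_congr rfl fun _ _ => Finset.sum_congr rfl fun _ _ => by ring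

lemma distMeas_zero_mid (Ma : Matrix (Fin dA × Fin dA') (Fin dA × Fin dA') ℂ)
    (ρ : BMat dA' dB') :
    distMeas Ma (0 : Matrix (Fin dB' × Fin dB) (Fin dB' × Fin dB) ℂ) ρ = 0 := by
  ext pq rs; simp [distMeas]

lemma distMeas_add_mid (Ma : Matrix (Fin dA × Fin dA') (Fin dA × Fin dA') ℂ)
    (Mb₁ Mb₂ : Matrix (Fin dB' × Fin dB) (Fin dB' × Fin dB) ℂ) (ρ : BMat dA' dB') :
    distMeas Ma (Mb₁ + Mb₂) ρ = distMeas Ma Mb₁ ρ + distMeas Ma Mb₂ ρ := by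
  ext pq rs
  simp [distMeas, add_mul, mul_add, Finset.sum_add_distrib]

lemma distMeas_smul_mid (Ma : Matrix (Fin dA × Fin dA') (Fin dA × Fin dA') ℂ)
    (Mb : Matrix (Fin dB' × Fin dB) (Fin dB' × Fin dB) ℂ) (c : ℂ) (ρ : BMat dA' dB') :
    distMeas Ma (c • Mb) ρ = c • distMeas Ma Mb ρ := by
  ext pq rs
  simp only [distMeas, Matrix.of_apply, Matrix.smul_apply, smul_eq_mul, Finset.mul_sum]
  refine Finset.sum_congr rfl fun _ _ => Finset.sum_congr rfl fun _ _ =>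
    Finset.sum_congr rfl fun _ _ => Finset.sum_congr rfl fun _ _ => by ring

lemma distMeas_sum_left {ι : Type*} (s : Finset ι)
    (f : ι → Matrix (Fin dA × Fin dA') (Fin dA × Fin dA') ℂ)
    (Mb : Matrix (Fin dB' × Fin dB) (Fin dB' × Fin dB) ℂ) (ρ : BMat dA' dB') :
    distMeas (∑ i ∈ s, f i) Mb ρ = ∑ i ∈ s, distMeas (f i) Mb ρ := by
  classical
  induction s using Finset.induction with
  | empty => simp [distMeas_zero_left]
  | insert _ _ h ih => simp [Finset.sum_insert h, distMeas_add_left, ih]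

lemma distMeas_sum_mid {ι : Type*} (s : Finset ι)
    (Ma : Matrix (Fin dA × Fin dA') (Fin dA × Fin dA') ℂ)
    (g : ι → Matrix (Fin dB' × Fin dB) (Fin dB' × Fin dB) ℂ) (ρ : BMat dA' dB') :
    distMeas Ma (∑ j ∈ s, g j) ρ = ∑ j ∈ s, distMeas Ma (g j) ρ := by
  classical
  induction s using Finset.induction with
  | empty => simp [distMeas_zero_mid]
  | insert _ _ h ih => simp [Finset.sum_insert h, distMeas_add_mid, ih]

lemma distMeas_sum_state {ι : Type*} (s : Finset ι)
    (Ma : Matrix (Fin dA × Fin dA') (Fin dA × Fin dA') ℂ)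
    (Mb : Matrix (Fin dB' × Fin dB) (Fin dB' × Fin dB) ℂ) (g : ι → BMat dA' dB') :
    distMeas Ma Mb (∑ j ∈ s, g j) = ∑ j ∈ s, distMeas Ma Mb (g j) := by
  classical
  induction s using Finset.induction with
  | empty => simp [distMeas_zero_state]
  | insert _ _ h ih => simp [Finset.sum_insert h, distMeas_add_state, ih]

lemma distMeas_ite_state (c : Prop) [Decidable c]
    (Ma : Matrix (Fin dA × Fin dA') (Fin dA × Fin dA') ℂ)
    (Mb : Matrix (Fin dB' × Fin dB) (Fin dB' × Fin dB) ℂ) (ρ₁ ρ₂ : BMat dA' dB') :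
    distMeas Ma Mb (if c then ρ₁ else ρ₂)
      = if c then distMeas Ma Mb ρ₁ else distMeas Ma Mb ρ₂ :=
  apply_ite _ c _ _

end Lin

section Psd

lemma posSemidef_sum {ι n : Type*} [Fintype n] (s : Finset ι) (f : ι → Matrix n n ℂ)
    (h : ∀ i ∈ s, (f i).PosSemidef) : (∑ i ∈ s, f i).PosSemidef :=
  Finset.sum_induction f _ (fun _ _ ha hb => ha.add hb) Matrix.PosSemidef.zero h

lemma posSemidef_smul_real {n : Type*} [Fintype n] {M : Matrix n n ℂ}
    (hM : M.PosSemidef) {c : ℝ} (hc : 0 ≤ c) : ((c : ℂ) • M).PosSemidef := by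
  rw [Matrix.posSemidef_iff_dotProduct_mulVec]
  constructor
  · unfold Matrix.IsHermitian
    rw [Matrix.conjTranspose_smul, hM.1.eq]
    simp [Complex.conj_ofReal]
  · intro x
    rw [Matrix.smul_mulVec, dotProduct_smul, smul_eq_mul]
    exact mul_nonneg (by exact_mod_cast hc) (hM.dotProduct_mulVec_nonneg x)

lemma sum_eigenvalues_eq_one {n : Type*} [Fintype n] [DecidableEq n] {ρ : Matrix n n ℂ}
    (h : ρ.IsHermitian) (ht : ρ.trace = 1) : ∑ i, h.eigenvalues i = 1 := by
  have h1 : ρ.trace = ∑ i, (h.eigenvalues i : ℂ) := by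
    conv_lhs => rw [h.spectral_theorem, Unitary.conjStarAlgAut_apply]
    rw [Matrix.trace_mul_cycle]
    rw [show (star (h.eigenvectorUnitary : Matrix n n ℂ)) * (h.eigenvectorUnitary : Matrix n n ℂ)
        = 1 from Matrix.mem_unitaryGroup_iff'.mp h.eigenvectorUnitary.2]
    rw [Matrix.one_mul, Matrix.trace_diagonal]
    simp
  rw [ht] at h1
  have := h1.symm
  rw [← Complex.ofReal_sum] at this
  exact_mod_cast this

lemma posSemidef_one_sub {n : Type*} [Fintype n] [DecidableEq n] {ρ : Matrix n n ℂ}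
    (h : ρ.PosSemidef) (ht : ρ.trace = 1) : ((1 : Matrix n n ℂ) - ρ).PosSemidef := by
  have hH := h.1
  have heig : ∀ i, hH.eigenvalues i ≤ 1 := by
    intro i
    rw [← sum_eigenvalues_eq_one hH ht]
    exact Finset.single_le_sum (fun j _ => h.eigenvalues_nonneg j) (Finset.mem_univ i)
  have hdiag : Matrix.diagonal ((fun i => ((1 - hH.eigenvalues i : ℝ) : ℂ)) : n → ℂ)
      = 1 - Matrix.diagonal (RCLike.ofReal ∘ hH.eigenvalues) := by
    rw [← Matrix.diagonal_one, Matrix.diagonal_sub]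
    congr 1
    ext i
    simp
  have hrep : (hH.eigenvectorUnitary : Matrix n n ℂ) *
        Matrix.diagonal ((fun i => ((1 - hH.eigenvalues i : ℝ) : ℂ)) : n → ℂ) *
        (star (hH.eigenvectorUnitary : Matrix n n ℂ)) = (1 : Matrix n n ℂ) - ρ := by
    rw [hdiag, Matrix.mul_sub, Matrix.sub_mul, Matrix.mul_one,
      Matrix.mem_unitaryGroup_iff.mp hH.eigenvectorUnitary.2, ← Unitary.conjStarAlgAut_apply (S := ℂ) hH.eigenvectorUnitary, ← hH.spectral_theorem]
  rw [← hrep, Matrix.star_eq_conjTranspose]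
  apply Matrix.PosSemidef.mul_mul_conjTranspose_same
  rw [Matrix.posSemidef_diagonal_iff]
  intro i
  rw [show ((0 : ℂ) ≤ ((1 - hH.eigenvalues i : ℝ) : ℂ)) ↔ 0 ≤ (1 - hH.eigenvalues i : ℝ) from by
    constructor <;> intro hh <;> exact_mod_cast hh]
  linarith [heig i]

end Psd

section Emb

lemma sum_kronecker {ι l m n p : Type*} [Fintype ι] (f : ι → Matrix l m ℂ) (B : Matrix n p ℂ) :
    (∑ i, f i) ⊗ₖ B = ∑ i, (f i ⊗ₖ B) := by
  classical
  induction (Finset.univ : Finset ι) using Finset.induction with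
  | empty => simp [Matrix.zero_kronecker]
  | insert _ _ h ih => simp_all [Finset.sum_insert h, Matrix.add_kronecker]

lemma kronecker_sum {ι l m n p : Type*} [Fintype ι] (A : Matrix l m ℂ) (g : ι → Matrix n p ℂ) :
    A ⊗ₖ (∑ i, g i) = ∑ i, (A ⊗ₖ g i) := by
  classical
  induction (Finset.univ : Finset ι) using Finset.induction with
  | empty => simp [Matrix.kronecker_zero]
  | insert _ _ h ih => simp_all [Finset.sum_insert h, Matrix.kronecker_add]

def emb (nL d : ℕ) (l : Fin nL) : Matrix (Fin d) (Fin (nL * d)) ℂ :=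
  Matrix.of fun k u => if u = finProdFinEquiv (l, k) then 1 else 0

lemma emb_mul_conjT (nL d : ℕ) (l l' : Fin nL) :
    emb nL d l * (emb nL d l')ᴴ = if l = l' then (1 : Matrix (Fin d) (Fin d) ℂ) else 0 := by
  ext k k'
  simp only [emb, Matrix.mul_apply, Matrix.conjTranspose_apply, Matrix.of_apply]
  simp only [apply_ite (star : ℂ → ℂ), star_one, star_zero, ite_mul, one_mul, zero_mul,
    mul_ite, mul_one, mul_zero, Finset.sum_ite_eq', Finset.mem_univ, if_true]
  by_cases h : l = l'
  · subst h
    by_cases hk : k = k'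
    · simp [hk, Matrix.one_apply]
    · simp [hk, Matrix.one_apply, Equiv.apply_eq_iff_eq, Prod.ext_iff, Ne.symm hk]
  · have hne : finProdFinEquiv (l, k) ≠ finProdFinEquiv (l', k') := by
      simp [Equiv.apply_eq_iff_eq, Prod.ext_iff, h]
    simp only [Equiv.apply_eq_iff_eq, Prod.ext_iff, if_neg h, Matrix.zero_apply]
    have : ¬(l' = l ∧ k' = k) := fun hc => h hc.1.symm
    simp [this]

lemma sum_conjT_mul_emb (nL d : ℕ) :
    ∑ l, (emb nL d l)ᴴ * emb nL d l = (1 : Matrix (Fin (nL * d)) (Fin (nL * d)) ℂ) := by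
  ext u u'
  rw [Matrix.sum_apply]
  simp only [emb, Matrix.mul_apply, Matrix.conjTranspose_apply, Matrix.of_apply]
  simp only [apply_ite (star : ℂ → ℂ), star_one, star_zero, ite_mul, one_mul, zero_mul,
    mul_ite, mul_one, mul_zero]
  rw [← Fintype.sum_prod_type']
  rw [Fintype.sum_equiv finProdFinEquiv _
    (fun w => if u' = w then (if u = w then (1:ℂ) else 0) else 0) (fun x => by simp)]
  simp [Finset.sum_ite_eq, Matrix.one_apply, eq_comm]

end Emb

section Construct

variable {dA dB oA oB oA' oB' : ℕ}

lemma sim_mem (nL : ℕ) (pL : Fin nL → ℝ)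
    (pA : Fin oA' → Fin oA → Fin nL → ℝ) (pB : Fin oB' → Fin oB → Fin nL → ℝ)
    (kE : Fin nL → ℕ) (KE : (l : Fin nL) → Fin (kE l) → Mat dA)
    (kN : Fin nL → ℕ) (KN : (l : Fin nL) → Fin (kN l) → Mat dB)
    (hpL : ∀ l, 0 ≤ pL l) (hpLs : ∑ l, pL l = 1)
    (hpA : ∀ a i l, 0 ≤ pA a i l) (hpAs : ∀ i l, ∑ a, pA a i l = 1)
    (hpB : ∀ b j l, 0 ≤ pB b j l) (hpBs : ∀ j l, ∑ b, pB b j l = 1)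
    (hKE : ∀ l, ∑ s : Fin (kE l), (KE l s)ᴴ * KE l s = 1)
    (hKN : ∀ l, ∑ t : Fin (kN l), (KN l t)ᴴ * KN l t = 1)
    {dA' dB' : ℕ}
    (Na : Fin oA → Matrix (Fin dA × Fin dA') (Fin dA × Fin dA') ℂ)
    (Nb : Fin oB → Matrix (Fin dB' × Fin dB) (Fin dB' × Fin dB) ℂ)
    (ρ : BMat dA' dB')
    (hNa : IsPOVM Na) (hNb : IsPOVM Nb) (hρ : IsDensity ρ) :
    ∃ (Ma : Fin oA' → Matrix (Fin dA × Fin (nL * dA')) (Fin dA × Fin (nL * dA')) ℂ)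
      (Mb : Fin oB' → Matrix (Fin (nL * dB') × Fin dB) (Fin (nL * dB') × Fin dB) ℂ)
      (ρ'' : BMat (nL * dA') (nL * dB')),
      IsPOVM Ma ∧ IsPOVM Mb ∧ IsDensity ρ'' ∧ (SepState ρ → SepState ρ'') ∧
      ∀ a b, distMeas (Ma a) (Mb b) ρ'' =
        ∑ l : Fin nL, ∑ i : Fin oA, ∑ j : Fin oB,
          ((pL l * pA a i l * pB b j l : ℝ) : ℂ) •
            ∑ s : Fin (kE l), ∑ t : Fin (kN l),
              (KE l s ⊗ₖ KN l t)ᴴ * distMeas (Na i) (Nb j) ρ * (KE l s ⊗ₖ KN l t) := by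
  classical
  set PE : Fin nL → Matrix (Fin dA') (Fin (nL * dA')) ℂ := emb nL dA' with hPE
  set PN : Fin nL → Matrix (Fin dB') (Fin (nL * dB')) ℂ := emb nL dB' with hPN
  refine ⟨fun a => ∑ l, ∑ i, ((pA a i l : ℝ) : ℂ) •
      ∑ s : Fin (kE l), (KE l s ⊗ₖ PE l)ᴴ * Na i * (KE l s ⊗ₖ PE l),
    fun b => ∑ l, ∑ j, ((pB b j l : ℝ) : ℂ) •
      ∑ t : Fin (kN l), (PN l ⊗ₖ KN l t)ᴴ * Nb j * (PN l ⊗ₖ KN l t),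
    ∑ l, ((pL l : ℝ) : ℂ) • ((PE l ⊗ₖ PN l)ᴴ * ρ * (PE l ⊗ₖ PN l)),
    ⟨?_, ?_⟩, ⟨?_, ?_⟩, ⟨?_, ?_⟩, ?_, ?_⟩
  · -- Ma PSD
    intro a
    refine posSemidef_sum _ _ fun l _ => posSemidef_sum _ _ fun i _ => ?_
    exact posSemidef_smul_real (posSemidef_sum _ _ fun s _ =>
      (hNa.1 i).conjTranspose_mul_mul_same _) (hpA a i l)
  · -- Ma sums to 1
    rw [Finset.sum_comm]
    have hswap : ∀ l : Fin nL, ∑ a, ∑ i, ((pA a i l : ℝ) : ℂ) •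
        (∑ s : Fin (kE l), (KE l s ⊗ₖ PE l)ᴴ * Na i * (KE l s ⊗ₖ PE l))
        = ∑ i, (∑ s : Fin (kE l), (KE l s ⊗ₖ PE l)ᴴ * Na i * (KE l s ⊗ₖ PE l)) := by
      intro l
      rw [Finset.sum_comm]
      refine Finset.sum_congr rfl fun i _ => ?_
      rw [← Finset.sum_smul, ← Complex.ofReal_sum, hpAs i l, Complex.ofReal_one, one_smul]
    rw [Finset.sum_congr rfl fun l _ => hswap l]
    have hinner : ∀ l : Fin nL, ∑ i, ∑ s : Fin (kE l),
        (KE l s ⊗ₖ PE l)ᴴ * Na i * (KE l s ⊗ₖ PE l)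
        = (1 : Mat dA) ⊗ₖ ((PE l)ᴴ * PE l) := by
      intro l
      rw [Finset.sum_comm]
      have : ∀ s : Fin (kE l), ∑ i, (KE l s ⊗ₖ PE l)ᴴ * Na i * (KE l s ⊗ₖ PE l)
          = ((KE l s)ᴴ * KE l s) ⊗ₖ ((PE l)ᴴ * PE l) := by
        intro s
        calc ∑ i, (KE l s ⊗ₖ PE l)ᴴ * Na i * (KE l s ⊗ₖ PE l)
            = (KE l s ⊗ₖ PE l)ᴴ * (∑ i, Na i) * (KE l s ⊗ₖ PE l) := by
              rw [← Matrix.sum_mul, ← Matrix.mul_sum]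
          _ = ((KE l s)ᴴ * KE l s) ⊗ₖ ((PE l)ᴴ * PE l) := by
              rw [hNa.2, Matrix.mul_one, kron_conjT, ← Matrix.mul_kronecker_mul]
      rw [Finset.sum_congr rfl fun s _ => this s, ← sum_kronecker, hKE l]
    rw [Finset.sum_congr rfl fun l _ => hinner l, ← kronecker_sum, sum_conjT_mul_emb,
      Matrix.one_kronecker_one]
  · -- Mb PSD
    intro b
    refine posSemidef_sum _ _ fun l _ => posSemidef_sum _ _ fun j _ => ?_
    exact posSemidef_smul_real (posSemidef_sum _ _ fun t _ =>
      (hNb.1 j).conjTranspose_mul_mul_same _) (hpB b j l)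
  · -- Mb sums to 1
    rw [Finset.sum_comm]
    have hswap : ∀ l : Fin nL, ∑ b, ∑ j, ((pB b j l : ℝ) : ℂ) •
        (∑ t : Fin (kN l), (PN l ⊗ₖ KN l t)ᴴ * Nb j * (PN l ⊗ₖ KN l t))
        = ∑ j, (∑ t : Fin (kN l), (PN l ⊗ₖ KN l t)ᴴ * Nb j * (PN l ⊗ₖ KN l t)) := by
      intro l
      rw [Finset.sum_comm]
      refine Finset.sum_congr rfl fun j _ => ?_
      rw [← Finset.sum_smul, ← Complex.ofReal_sum, hpBs j l, Complex.ofReal_one, one_smul]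
    rw [Finset.sum_congr rfl fun l _ => hswap l]
    have hinner : ∀ l : Fin nL, ∑ j, ∑ t : Fin (kN l),
        (PN l ⊗ₖ KN l t)ᴴ * Nb j * (PN l ⊗ₖ KN l t)
        = ((PN l)ᴴ * PN l) ⊗ₖ (1 : Mat dB) := by
      intro l
      rw [Finset.sum_comm]
      have : ∀ t : Fin (kN l), ∑ j, (PN l ⊗ₖ KN l t)ᴴ * Nb j * (PN l ⊗ₖ KN l t)
          = ((PN l)ᴴ * PN l) ⊗ₖ ((KN l t)ᴴ * KN l t) := by
        intro t
        calc ∑ j, (PN l ⊗ₖ KN l t)ᴴ * Nb j * (PN l ⊗ₖ KN l t)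
            = (PN l ⊗ₖ KN l t)ᴴ * (∑ j, Nb j) * (PN l ⊗ₖ KN l t) := by
              rw [← Matrix.sum_mul, ← Matrix.mul_sum]
          _ = ((PN l)ᴴ * PN l) ⊗ₖ ((KN l t)ᴴ * KN l t) := by
              rw [hNb.2, Matrix.mul_one, kron_conjT, ← Matrix.mul_kronecker_mul]
      rw [Finset.sum_congr rfl fun t _ => this t, ← kronecker_sum, hKN l]
    rw [Finset.sum_congr rfl fun l _ => hinner l, ← sum_kronecker, sum_conjT_mul_emb,
      Matrix.one_kronecker_one]
  · -- ρ'' PSD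
    refine posSemidef_sum _ _ fun l _ => posSemidef_smul_real
      (hρ.1.conjTranspose_mul_mul_same _) (hpL l)
  · -- ρ'' trace
    rw [Matrix.trace_sum]
    have : ∀ l : Fin nL, (((pL l : ℝ) : ℂ) •
        ((PE l ⊗ₖ PN l)ᴴ * ρ * (PE l ⊗ₖ PN l))).trace = ((pL l : ℝ) : ℂ) := by
      intro l
      rw [Matrix.trace_smul, Matrix.trace_mul_cycle, kron_conjT, ← Matrix.mul_kronecker_mul,
        emb_mul_conjT, emb_mul_conjT, if_pos rfl, if_pos rfl, Matrix.one_kronecker_one,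
        Matrix.one_mul, hρ.2, smul_eq_mul, mul_one]
    rw [Finset.sum_congr rfl fun l _ => this l, ← Complex.ofReal_sum, hpLs, Complex.ofReal_one]
  · -- separability
    rintro ⟨n0, p0, ρA, ρB, hp0, hp0s, hρA, hρB, hρeq⟩
    refine ⟨nL * n0,
      fun u => pL ((finProdFinEquiv.symm u).1) * p0 ((finProdFinEquiv.symm u).2),
      fun u => (emb nL dA' (finProdFinEquiv.symm u).1)ᴴ * ρA ((finProdFinEquiv.symm u).2) *
        emb nL dA' (finProdFinEquiv.symm u).1,
      fun u => (emb nL dB' (finProdFinEquiv.symm u).1)ᴴ * ρB ((finProdFinEquiv.symm u).2) *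
        emb nL dB' (finProdFinEquiv.symm u).1,
      fun u => mul_nonneg (hpL _) (hp0 _), ?_, ?_, ?_, ?_⟩
    · rw [← Equiv.sum_comp (finProdFinEquiv (m := nL) (n := n0))]
      simp only [Equiv.symm_apply_apply]
      rw [Fintype.sum_prod_type, ← hpLs]
      refine Finset.sum_congr rfl fun l _ => ?_
      simp only [← Finset.mul_sum, hp0s, mul_one]
    · intro u
      exact ⟨(hρA _).1.conjTranspose_mul_mul_same _, by
        rw [Matrix.trace_mul_cycle, emb_mul_conjT, if_pos rfl, Matrix.one_mul, (hρA _).2]⟩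
    · intro u
      exact ⟨(hρB _).1.conjTranspose_mul_mul_same _, by
        rw [Matrix.trace_mul_cycle, emb_mul_conjT, if_pos rfl, Matrix.one_mul, (hρB _).2]⟩
    · rw [← Equiv.sum_comp (finProdFinEquiv (m := nL) (n := n0))]
      simp only [Equiv.symm_apply_apply]
      rw [Fintype.sum_prod_type]
      rw [hρeq]
      refine Finset.sum_congr rfl fun l _ => ?_
      rw [Matrix.mul_sum, Matrix.sum_mul, Finset.smul_sum]
      refine Finset.sum_congr rfl fun m _ => ?_
      rw [Matrix.mul_smul, Matrix.smul_mul, smul_smul, kron_conjT, ← Matrix.mul_kronecker_mul,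
        ← Matrix.mul_kronecker_mul]
      congr 1
      push_cast
      ring
  · -- the simulation identity
    intro a b
    have hGG : ∀ l : Fin nL, (emb nL dA' l ⊗ₖ emb nL dB' l) *
        (emb nL dA' l ⊗ₖ emb nL dB' l)ᴴ = 1 := by
      intro l
      rw [kron_conjT, ← Matrix.mul_kronecker_mul, emb_mul_conjT, emb_mul_conjT,
        if_pos rfl, if_pos rfl, Matrix.one_kronecker_one]
    have hstate : ∀ l l₂ : Fin nL, (emb nL dA' l ⊗ₖ emb nL dB' l₂) *
        (∑ l', ((pL l' : ℝ) : ℂ) • ((emb nL dA' l' ⊗ₖ emb nL dB' l')ᴴ * ρ *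
          (emb nL dA' l' ⊗ₖ emb nL dB' l'))) * (emb nL dA' l ⊗ₖ emb nL dB' l₂)ᴴ
        = if l = l₂ then ((pL l : ℝ) : ℂ) • ρ else 0 := by
      intro l l₂
      rw [Matrix.mul_sum, Matrix.sum_mul]
      by_cases h : l = l₂
      · subst h
        rw [if_pos rfl]
        rw [Finset.sum_eq_single l (fun l' _ hne => ?_) (fun hmem => absurd (Finset.mem_univ l) hmem)]
        · rw [Matrix.mul_smul, Matrix.smul_mul]
          congr 1
          have hassoc : (emb nL dA' l ⊗ₖ emb nL dB' l) *
              ((emb nL dA' l ⊗ₖ emb nL dB' l)ᴴ * ρ * (emb nL dA' l ⊗ₖ emb nL dB' l)) *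
              (emb nL dA' l ⊗ₖ emb nL dB' l)ᴴ
              = ((emb nL dA' l ⊗ₖ emb nL dB' l) * (emb nL dA' l ⊗ₖ emb nL dB' l)ᴴ) * ρ *
                ((emb nL dA' l ⊗ₖ emb nL dB' l) * (emb nL dA' l ⊗ₖ emb nL dB' l)ᴴ) := by
            simp only [Matrix.mul_assoc]
          rw [hassoc, hGG, Matrix.one_mul, Matrix.mul_one]
        · have h0 : (emb nL dA' l ⊗ₖ emb nL dB' l) * (emb nL dA' l' ⊗ₖ emb nL dB' l')ᴴ = 0 := by
            rw [kron_conjT, ← Matrix.mul_kronecker_mul, emb_mul_conjT, emb_mul_conjT,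
              if_neg (fun hc => hne hc.symm), Matrix.zero_kronecker]
          rw [Matrix.mul_smul, Matrix.smul_mul]
          have hassoc : (emb nL dA' l ⊗ₖ emb nL dB' l) *
              ((emb nL dA' l' ⊗ₖ emb nL dB' l')ᴴ * ρ * (emb nL dA' l' ⊗ₖ emb nL dB' l')) *
              (emb nL dA' l ⊗ₖ emb nL dB' l)ᴴ
              = ((emb nL dA' l ⊗ₖ emb nL dB' l) * (emb nL dA' l' ⊗ₖ emb nL dB' l')ᴴ) * ρ *
                ((emb nL dA' l' ⊗ₖ emb nL dB' l') * (emb nL dA' l ⊗ₖ emb nL dB' l)ᴴ) := by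
            simp only [Matrix.mul_assoc]
          rw [hassoc, h0, Matrix.zero_mul, Matrix.zero_mul, smul_zero]
      · rw [if_neg h]
        refine Finset.sum_eq_zero fun l' _ => ?_
        have h0 : (emb nL dA' l ⊗ₖ emb nL dB' l₂) * (emb nL dA' l' ⊗ₖ emb nL dB' l')ᴴ = 0 := by
          rw [kron_conjT, ← Matrix.mul_kronecker_mul, emb_mul_conjT, emb_mul_conjT]
          by_cases h1 : l = l'
          · rw [if_pos h1, if_neg (fun hc => h (h1.trans hc.symm)), Matrix.kronecker_zero]
          · rw [if_neg h1, Matrix.zero_kronecker]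
        rw [Matrix.mul_smul, Matrix.smul_mul]
        have hassoc : (emb nL dA' l ⊗ₖ emb nL dB' l₂) *
            ((emb nL dA' l' ⊗ₖ emb nL dB' l')ᴴ * ρ * (emb nL dA' l' ⊗ₖ emb nL dB' l')) *
            (emb nL dA' l ⊗ₖ emb nL dB' l₂)ᴴ
            = ((emb nL dA' l ⊗ₖ emb nL dB' l₂) * (emb nL dA' l' ⊗ₖ emb nL dB' l')ᴴ) * ρ *
              ((emb nL dA' l' ⊗ₖ emb nL dB' l') * (emb nL dA' l ⊗ₖ emb nL dB' l₂)ᴴ) := by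
          simp only [Matrix.mul_assoc]
        rw [hassoc, h0, Matrix.zero_mul, Matrix.zero_mul, smul_zero]
    simp only [hPE, hPN, distMeas_sum_left, distMeas_smul_left, distMeas_sum_mid, distMeas_smul_mid,
      distMeas_conj, hstate, distMeas_ite_state, distMeas_smul_state, distMeas_zero_state,
      mul_ite, ite_mul, Matrix.mul_zero, Matrix.zero_mul, Matrix.mul_smul, Matrix.smul_mul]
    refine Finset.sum_congr rfl fun l _ => ?_
    simp only [Finset.sum_ite_irrel, Finset.sum_const_zero, smul_ite, smul_zero,
      Finset.sum_ite_eq', Finset.mem_univ, if_true, Finset.smul_sum]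
    conv_rhs => rw [Finset.sum_comm]
    conv_rhs => enter [2, j, 2, i]; rw [Finset.sum_comm]
    conv_rhs => enter [2, j]; rw [Finset.sum_comm]
    refine Finset.sum_congr rfl fun j _ => Finset.sum_congr rfl fun t _ =>
      Finset.sum_congr rfl fun i _ => Finset.sum_congr rfl fun s _ => ?_
    rw [smul_smul, smul_smul]
    congr 1
    push_cast
    ring

end Construct

section Main

variable {dA dB oA oB oA' oB' : ℕ}

lemma kron_diag_sum_one (dA' dB' : ℕ) :
    ∑ p : Fin dA' × Fin dB',
      ((Matrix.diagonal (fun i => if i = p.1 then (1:ℂ) else 0)) ⊗ₖ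
        (Matrix.diagonal (fun i => if i = p.2 then (1:ℂ) else 0)))
      = (1 : BMat dA' dB') := by
  ext ⟨k, j⟩ ⟨k', j'⟩
  rw [Matrix.sum_apply]
  simp only [Matrix.kroneckerMap_apply, Matrix.diagonal_apply, Fintype.sum_prod_type,
    ite_mul, zero_mul, mul_ite, mul_zero, mul_one]
  by_cases hk : k = k'
  · subst hk
    by_cases hj : j = j'
    · subst hj
      simp [Finset.sum_ite_eq', Matrix.one_apply]
    · simp [hj, Matrix.one_apply]
  · simp [hk, Matrix.one_apply]

lemma robn_feasible_nonempty (M : Fin oA → Fin oB → BMat dA dB) (hM : MemRBN M) :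
    { r : ℝ | 0 ≤ r ∧ ∃ (N O : Fin oA → Fin oB → BMat dA dB),
      MemRBN N ∧ MemFBN O ∧
      ∀ a b, M a b + (r : ℂ) • N a b = ((1 + r : ℝ) : ℂ) • O a b }.Nonempty := by
  classical
  obtain ⟨dA', dB', Ma, Mb, ρ, hMa, hMb, hρ, hrep⟩ := hM
  have hpos : 0 < dA' * dB' := by
    rcases Nat.eq_zero_or_pos (dA' * dB') with h | h
    · exfalso
      have hcard : Fintype.card (Fin dA' × Fin dB') = 0 := by simp [h]
      have hempty : IsEmpty (Fin dA' × Fin dB') := Fintype.card_eq_zero_iff.mp hcard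
      have h0 : ρ.trace = 0 := by
        rw [Matrix.trace]
        exact Finset.sum_of_isEmpty _
      rw [hρ.2] at h0
      exact one_ne_zero h0
    · exact h
  set d : ℕ := dA' * dB' with hd
  have hdR : (0:ℝ) < (d:ℝ) := by exact_mod_cast hpos
  have hdne : ((d:ℝ) : ℂ) ≠ 0 := by
    simp only [ne_eq, Complex.ofReal_eq_zero]
    exact ne_of_gt hdR
  set r : ℝ := (d : ℝ) with hr
  set σ0 : BMat dA' dB' := (((d:ℝ)⁻¹ : ℝ) : ℂ) • (1 : BMat dA' dB') with hσ0
  have htr1 : (1 : BMat dA' dB').trace = ((d:ℝ) : ℂ) := by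
    rw [Matrix.trace_one]
    simp [hd]
  have hσ0tr : σ0.trace = 1 := by
    rw [hσ0, Matrix.trace_smul, htr1, smul_eq_mul]
    rw [← Complex.ofReal_mul]
    rw [inv_mul_cancel₀ (ne_of_gt hdR)]
    simp
  have hσ0psd : σ0.PosSemidef :=
    posSemidef_smul_real Matrix.PosSemidef.one (inv_nonneg.mpr (le_of_lt hdR))
  have hσ0den : IsDensity σ0 := ⟨hσ0psd, hσ0tr⟩
  have hσ0sep : SepState σ0 := by
    refine ⟨dA' * dB', fun _ => (d:ℝ)⁻¹,
      fun u => Matrix.diagonal (fun i => if i = (finProdFinEquiv.symm u).1 then 1 else 0),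
      fun u => Matrix.diagonal (fun i => if i = (finProdFinEquiv.symm u).2 then 1 else 0),
      fun _ => inv_nonneg.mpr (le_of_lt hdR), ?_, ?_, ?_, ?_⟩
    · rw [Finset.sum_const, Finset.card_univ, Fintype.card_fin, nsmul_eq_mul]
      rw [mul_inv_cancel₀ (ne_of_gt hdR)]
    · intro u
      constructor
      · refine Matrix.PosSemidef.diagonal fun i => ?_
        dsimp only
        split <;> simp
      · rw [Matrix.trace_diagonal]
        simp [Finset.sum_ite_eq', Finset.mem_univ]
    · intro u
      constructor
      · refine Matrix.PosSemidef.diagonal fun i => ?_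
        dsimp only
        split <;> simp
      · rw [Matrix.trace_diagonal]
        simp [Finset.sum_ite_eq', Finset.mem_univ]
    · rw [← Equiv.sum_comp (finProdFinEquiv (m := dA') (n := dB'))]
      simp only [Equiv.symm_apply_apply]
      rw [← Finset.smul_sum]
      rw [show ∑ p : Fin dA' × Fin dB',
          ((Matrix.diagonal (fun i => if i = p.1 then (1:ℂ) else 0)) ⊗ₖ
            (Matrix.diagonal (fun i => if i = p.2 then (1:ℂ) else 0))) = (1 : BMat dA' dB')
        from kron_diag_sum_one dA' dB', hσ0]
  set η : BMat dA' dB' := ((r⁻¹ : ℝ) : ℂ) • (((1 + r : ℝ) : ℂ) • σ0 - ρ) with hη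
  have hX : ((1 + r : ℝ) : ℂ) • σ0 - ρ
      = (((d:ℝ)⁻¹ : ℝ) : ℂ) • (1 : BMat dA' dB') + ((1 : BMat dA' dB') - ρ) := by
    rw [hσ0, smul_smul]
    have hsc : ((1 + r : ℝ) : ℂ) * (((d:ℝ)⁻¹ : ℝ) : ℂ) = (((d:ℝ)⁻¹ : ℝ) : ℂ) + 1 := by
      rw [hr]
      push_cast
      field_simp
    rw [hsc, add_smul, one_smul, add_sub_assoc]
  have hηpsd : η.PosSemidef := by
    rw [hη, hX]
    exact posSemidef_smul_real
      ((posSemidef_smul_real Matrix.PosSemidef.one (inv_nonneg.mpr (le_of_lt hdR))).add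
        (posSemidef_one_sub hρ.1 hρ.2))
      (inv_nonneg.mpr (le_of_lt hdR))
  have hηtr : η.trace = 1 := by
    rw [hη, Matrix.trace_smul, Matrix.trace_sub, Matrix.trace_smul, hσ0tr, hρ.2]
    rw [smul_eq_mul, smul_eq_mul, mul_one, hr]
    push_cast
    field_simp
    ring
  have hstate : ρ + (r : ℂ) • η = ((1 + r : ℝ) : ℂ) • σ0 := by
    rw [hη, smul_smul, ← Complex.ofReal_mul]
    rw [mul_inv_cancel₀ (ne_of_gt hdR)]
    rw [Complex.ofReal_one, one_smul, add_sub_cancel]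
  refine ⟨r, Nat.cast_nonneg _,
    fun a b => distMeas (Ma a) (Mb b) η,
    fun a b => distMeas (Ma a) (Mb b) σ0,
    ⟨dA', dB', Ma, Mb, η, hMa, hMb, ⟨hηpsd, hηtr⟩, fun _ _ => rfl⟩,
    ⟨dA', dB', Ma, Mb, σ0, hMa, hMb, hσ0den, hσ0sep, fun _ _ => rfl⟩,
    fun a b => ?_⟩
  rw [hrep a b, ← distMeas_smul_state, ← distMeas_add_state, ← distMeas_smul_state, hstate]

end Main

end RobnAux

/-- RoBN is monotone under quantum simulation: if `M ≻_q M'` then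
`RoBN(M') ≤ RoBN(M)`. -/
theorem robn_monotone {dA dB oA oB oA' oB' : ℕ}
    (M : Fin oA → Fin oB → BMat dA dB) (M' : Fin oA' → Fin oB' → BMat dA dB)
    (hM : MemRBN M) (hM' : MemRBN M') (hsim : Simulates M M') :
    RoBN M' ≤ RoBN M := by
  classical
  obtain ⟨nL, pL, pA, pB, kE, KE, kN, KN, hpL, hpLs, hpA, hpAs, hpB, hpBs, hKE, hKN, hform⟩ := hsim
  unfold RoBN
  apply csInf_le_csInf
  · exact ⟨0, fun x hx => hx.1⟩
  · exact RobnAux.robn_feasible_nonempty M hM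
  · rintro r ⟨hr0, N, O, hN, hO, heq⟩
    refine ⟨hr0,
      (fun a b => ∑ l : Fin nL, ∑ i : Fin oA, ∑ j : Fin oB,
        ((pL l * pA a i l * pB b j l : ℝ) : ℂ) •
          ∑ s : Fin (kE l), ∑ t : Fin (kN l),
            (KE l s ⊗ₖ KN l t)ᴴ * N i j * (KE l s ⊗ₖ KN l t)),
      (fun a b => ∑ l : Fin nL, ∑ i : Fin oA, ∑ j : Fin oB,
        ((pL l * pA a i l * pB b j l : ℝ) : ℂ) •
          ∑ s : Fin (kE l), ∑ t : Fin (kN l),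
            (KE l s ⊗ₖ KN l t)ᴴ * O i j * (KE l s ⊗ₖ KN l t)), ?_, ?_, ?_⟩
    · obtain ⟨dN1, dN2, Na, Nb, ρN, hNa, hNb, hρN, hNrep⟩ := hN
      obtain ⟨Ma2, Mb2, ρ2, hMa2, hMb2, hρ2, _, hid⟩ :=
        RobnAux.sim_mem nL pL pA pB kE KE kN KN hpL hpLs hpA hpAs hpB hpBs hKE hKN
          Na Nb ρN hNa hNb hρN
      refine ⟨nL * dN1, nL * dN2, Ma2, Mb2, ρ2, hMa2, hMb2, hρ2, fun a b => ?_⟩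
      rw [hid a b]
      refine Finset.sum_congr rfl fun l _ => Finset.sum_congr rfl fun i _ =>
        Finset.sum_congr rfl fun j _ => ?_
      rw [hNrep i j]
    · obtain ⟨dO1, dO2, Oa, Ob, ρO, hOa, hOb, hρO, hOsep, hOrep⟩ := hO
      obtain ⟨Ma2, Mb2, ρ2, hMa2, hMb2, hρ2, hsep2, hid⟩ :=
        RobnAux.sim_mem nL pL pA pB kE KE kN KN hpL hpLs hpA hpAs hpB hpBs hKE hKN
          Oa Ob ρO hOa hOb hρO
      refine ⟨nL * dO1, nL * dO2, Ma2, Mb2, ρ2, hMa2, hMb2, hρ2, hsep2 hOsep, fun a b => ?_⟩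
      rw [hid a b]
      refine Finset.sum_congr rfl fun l _ => Finset.sum_congr rfl fun i _ =>
        Finset.sum_congr rfl fun j _ => ?_
      rw [hOrep i j]
    · intro a b
      rw [hform a b]
      simp only [Finset.smul_sum, smul_smul]
      rw [← Finset.sum_add_distrib]
      refine Finset.sum_congr rfl fun l _ => ?_
      rw [← Finset.sum_add_distrib]
      refine Finset.sum_congr rfl fun i _ => ?_
      rw [← Finset.sum_add_distrib]
      refine Finset.sum_congr rfl fun j _ => ?_
      rw [← Finset.sum_add_distrib]
      refine Finset.sum_congr rfl fun s _ => ?_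
      rw [← Finset.sum_add_distrib]
      refine Finset.sum_congr rfl fun t _ => ?_
      have hK := congrArg
        (fun X => (KE l s ⊗ₖ KN l t)ᴴ * X * (KE l s ⊗ₖ KN l t)) (heq i j)
      simp only [Matrix.mul_add, Matrix.add_mul, Matrix.mul_smul, Matrix.smul_mul] at hK
      set c : ℂ := ((pL l * pA a i l * pB b j l : ℝ) : ℂ) with hc
      set X := (KE l s ⊗ₖ KN l t)ᴴ * M i j * (KE l s ⊗ₖ KN l t) with hXdef
      set Y := (KE l s ⊗ₖ KN l t)ᴴ * N i j * (KE l s ⊗ₖ KN l t) with hYdef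
      set Z := (KE l s ⊗ₖ KN l t)ᴴ * O i j * (KE l s ⊗ₖ KN l t) with hZdef
      calc c • X + ((r : ℂ) * c) • Y = c • (X + (r : ℂ) • Y) := by
            rw [smul_add, smul_smul, mul_comm]
        _ = c • (((1 + r : ℝ) : ℂ) • Z) := by rw [hK]
        _ = (((1 + r : ℝ) : ℂ) * c) • Z := by rw [smul_smul, mul_comm]
end
end

section
/- For every distributed measurement M in R_BN and every ensemble G = {p(x,y), σ_xy}, the distributed-state-discrimination guessing probability satisfies p_DSD(G, M) ≤ (1 + RoBN(M)) · p_DSD(G). -/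
open Matrix BigOperators Kronecker ComplexOrder

noncomputable section

/-! ### Auxiliary lemmas for the proof of `dsd_upper_bound` -/

section AuxSwaps
variable {M' : Type} [AddCommMonoid M'] {ι α β γ δ ε : Type}
  [Fintype ι] [Fintype α] [Fintype β] [Fintype γ] [Fintype δ] [Fintype ε]

lemma aux_swap3 (f : ι → α → β → M') :
    ∑ x, ∑ a, ∑ b, f x a b = ∑ a, ∑ b, ∑ x, f x a b := by
  rw [Finset.sum_comm]; exact Finset.sum_congr rfl fun a _ => Finset.sum_comm
lemma aux_swap4 (f : ι → α → β → γ → M') :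
    ∑ x, ∑ a, ∑ b, ∑ c, f x a b c = ∑ a, ∑ b, ∑ c, ∑ x, f x a b c := by
  rw [Finset.sum_comm]; exact Finset.sum_congr rfl fun a _ => aux_swap3 fun x b c => f x a b c
lemma aux_swap5 (f : ι → α → β → γ → δ → M') :
    ∑ x, ∑ a, ∑ b, ∑ c, ∑ d, f x a b c d = ∑ a, ∑ b, ∑ c, ∑ d, ∑ x, f x a b c d := by
  rw [Finset.sum_comm]; exact Finset.sum_congr rfl fun a _ => aux_swap4 fun x b c d => f x a b c d
lemma aux_swap6 (f : ι → α → β → γ → δ → ε → M') :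
    ∑ x, ∑ a, ∑ b, ∑ c, ∑ d, ∑ e, f x a b c d e
      = ∑ a, ∑ b, ∑ c, ∑ d, ∑ e, ∑ x, f x a b c d e := by
  rw [Finset.sum_comm]; exact Finset.sum_congr rfl fun a _ => aux_swap5 fun x b c d e => f x a b c d e
lemma aux_swap7 {ζ : Type} [Fintype ζ] (f : ι → α → β → γ → δ → ε → ζ → M') :
    ∑ x, ∑ a, ∑ b, ∑ c, ∑ d, ∑ e, ∑ z, f x a b c d e z
      = ∑ a, ∑ b, ∑ c, ∑ d, ∑ e, ∑ z, ∑ x, f x a b c d e z := by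
  rw [Finset.sum_comm]
  exact Finset.sum_congr rfl fun a _ => aux_swap6 fun x b c d e z => f x a b c d e z
end AuxSwaps

lemma aux_sum_mul_sum_mul_sum {α β γ : Type} [Fintype α] [Fintype β] [Fintype γ]
    (f : α → ℂ) (g : β → ℂ) (h : γ → ℂ) :
    (∑ a, f a) * (∑ b, g b) * (∑ c, h c) = ∑ c, ∑ b, ∑ a, f a * (g b * h c) := by
  simp [Finset.sum_mul, Finset.mul_sum, mul_assoc]

lemma aux_sum2_mul_sum2 {α β γ δ : Type} [Fintype α] [Fintype β] [Fintype γ] [Fintype δ]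
    (f : α → β → ℂ) (g : γ → δ → ℂ) :
    (∑ a, ∑ b, f a b) * (∑ c, ∑ d, g c d) = ∑ a, ∑ b, ∑ c, ∑ d, f a b * g c d := by
  simp only [Finset.sum_mul, Finset.mul_sum]
  calc ∑ c : γ, ∑ d : δ, ∑ a : α, ∑ b : β, f a b * g c d
      = ∑ c : γ, ∑ a : α, ∑ b : β, ∑ d : δ, f a b * g c d :=
        Finset.sum_congr rfl fun c _ => aux_swap3 _
    _ = ∑ a, ∑ b, ∑ c, ∑ d, f a b * g c d := aux_swap3 _

section AuxPSD
variable {n : Type} [Fintype n]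

lemma aux_psd_smul {A : Matrix n n ℂ} (hA : A.PosSemidef) {c : ℝ} (hc : 0 ≤ c) :
    ((c : ℂ) • A).PosSemidef := by
  constructor
  · show ((c : ℂ) • A)ᴴ = _
    rw [Matrix.conjTranspose_smul, hA.1.eq]
    congr 1
    simp
  · exact (hA.smul (Complex.zero_le_real.2 hc)).2

lemma aux_psd_sum {ι : Type} (s : Finset ι) (f : ι → Matrix n n ℂ)
    (h : ∀ i ∈ s, (f i).PosSemidef) : (∑ i ∈ s, f i).PosSemidef :=
  Finset.sum_induction f _ (fun _ _ ha hb => ha.add hb) .zero h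

lemma aux_psd_trace_nonneg {A : Matrix n n ℂ} [DecidableEq n] (hA : A.PosSemidef) :
    0 ≤ A.trace := by
  rw [Matrix.trace]
  refine Finset.sum_nonneg fun i _ => ?_
  have h := hA.dotProduct_mulVec_nonneg (Pi.single i 1)
  simpa [Matrix.diag, dotProduct, Matrix.mulVec, Pi.single_apply, mul_ite, ite_mul,
    Finset.sum_ite_eq, Finset.sum_ite_eq'] using h

lemma aux_trace_mul_psd_re_nonneg {A B : Matrix n n ℂ} [DecidableEq n]
    (hA : A.PosSemidef) (hB : B.PosSemidef) : 0 ≤ ((A * B).trace).re := by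
  obtain ⟨C, rfl⟩ : ∃ C, A = Cᴴ * C := by
    open scoped MatrixOrder in exact CStarAlgebra.nonneg_iff_eq_star_mul_self.mp hA.nonneg
  rw [show (Cᴴ * C * B).trace = (C * B * Cᴴ).trace from (Matrix.trace_mul_cycle C B Cᴴ).symm]
  have h2 := aux_psd_trace_nonneg (hB.mul_mul_conjTranspose_same C)
  simpa using (Complex.le_def.mp h2).1

lemma aux_trace_re_mono {A B σ' : Matrix n n ℂ} [DecidableEq n] (h : (B - A).PosSemidef)
    (hσ : σ'.PosSemidef) : ((A * σ').trace).re ≤ ((B * σ').trace).re := by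
  have h0 := aux_trace_mul_psd_re_nonneg h hσ
  rw [Matrix.sub_mul, Matrix.trace_sub, Complex.sub_re] at h0
  linarith

lemma aux_sum_eigen_eq_trace {ρ : Matrix n n ℂ} [DecidableEq n]
    (h : ρ.IsHermitian) : ρ.trace = ((∑ i, h.eigenvalues i : ℝ) : ℂ) := by
  conv_lhs => rw [h.spectral_theorem, Unitary.conjStarAlgAut_apply]
  rw [Matrix.trace_mul_cycle]
  rw [show (star (h.eigenvectorUnitary : Matrix n n ℂ)) * ((h.eigenvectorUnitary : Matrix n n ℂ))
      = 1 from Unitary.coe_star_mul_self _, one_mul, Matrix.trace_diagonal]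
  push_cast
  rfl

lemma aux_one_sub_posSemidef {ρ : Matrix n n ℂ} [DecidableEq n]
    (h : ρ.PosSemidef) (ht : ρ.trace = 1) : (1 - ρ).PosSemidef := by
  have hH := h.1
  have hsum : (∑ i, hH.eigenvalues i : ℝ) = 1 := by
    have := (aux_sum_eigen_eq_trace hH).symm.trans ht
    exact_mod_cast this
  have hle : ∀ i, hH.eigenvalues i ≤ 1 := fun i => by
    rw [← hsum]
    exact Finset.single_le_sum (fun j _ => h.eigenvalues_nonneg j) (Finset.mem_univ i)
  set U : Matrix n n ℂ := (hH.eigenvectorUnitary : Matrix n n ℂ) with hU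
  have h1 : U * star U = 1 := Matrix.mem_unitaryGroup_iff.mp hH.eigenvectorUnitary.2
  have key : (1 - ρ) = U
      * Matrix.diagonal (fun i => ((1 - hH.eigenvalues i : ℝ) : ℂ))
      * (star U) := by
    have h2 := hH.spectral_theorem
    rw [Unitary.conjStarAlgAut_apply] at h2
    calc (1 : Matrix n n ℂ) - ρ
        = U * 1 * star U - U * (Matrix.diagonal (RCLike.ofReal ∘ hH.eigenvalues)) * star U := by
          rw [← h2, mul_one, h1]
      _ = U * (1 - Matrix.diagonal (RCLike.ofReal ∘ hH.eigenvalues)) * star U := by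
          rw [Matrix.mul_sub, Matrix.sub_mul, mul_one]
      _ = _ := by
          congr 1
          congr 1
          ext i j
          by_cases hij : i = j <;>
            simp [Matrix.diagonal, Matrix.one_apply, hij, Function.comp]
  rw [key, show star U = Uᴴ from rfl]
  refine Matrix.PosSemidef.mul_mul_conjTranspose_same ?_ _
  refine Matrix.posSemidef_diagonal_iff.mpr fun i => ?_
  rw [Complex.zero_le_real]
  linarith [hle i]
end AuxPSD

section AuxKronecker
variable {m n p q : Type} [Fintype m] [Fintype n] [Fintype p] [Fintype q]

lemma aux_kroneckerConjTranspose (A : Matrix m n ℂ) (B : Matrix p q ℂ) :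
    (A ⊗ₖ B)ᴴ = Aᴴ ⊗ₖ Bᴴ := by
  ext ⟨i, j⟩ ⟨k, l⟩
  simp [Matrix.conjTranspose_apply, mul_comm]

lemma aux_kronecker_sum_right {ι : Type} [Fintype ι] (A : Matrix m n ℂ)
    (Y : ι → Matrix p q ℂ) : A ⊗ₖ (∑ t, Y t) = ∑ t, A ⊗ₖ Y t := by
  ext ⟨i, j⟩ ⟨k, l⟩
  simp [Matrix.sum_apply, Finset.mul_sum]

lemma aux_sum_kronecker_left {ι : Type} [Fintype ι] (X : ι → Matrix m n ℂ)
    (B : Matrix p q ℂ) : (∑ s, X s) ⊗ₖ B = ∑ s, X s ⊗ₖ B := by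
  ext ⟨i, j⟩ ⟨k, l⟩
  simp [Matrix.sum_apply, Finset.sum_mul]
end AuxKronecker

section AuxDistMeas
variable {dA dA' dB' dB : ℕ}

lemma aux_distMeas_psd {Ma : Matrix (Fin dA × Fin dA') (Fin dA × Fin dA') ℂ}
    {Mb : Matrix (Fin dB' × Fin dB) (Fin dB' × Fin dB) ℂ}
    {ρ : BMat dA' dB'} (hMa : Ma.PosSemidef) (hMb : Mb.PosSemidef)
    (hρ : ρ.PosSemidef) : (distMeas Ma Mb ρ).PosSemidef := by
  obtain ⟨A, rfl⟩ : ∃ A, _ = Aᴴ * A := by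
    open scoped MatrixOrder in exact CStarAlgebra.nonneg_iff_eq_star_mul_self.mp hMa.nonneg
  obtain ⟨B, rfl⟩ : ∃ B, _ = Bᴴ * B := by
    open scoped MatrixOrder in exact CStarAlgebra.nonneg_iff_eq_star_mul_self.mp hMb.nonneg
  obtain ⟨W, rfl⟩ : ∃ W, _ = Wᴴ * W := by
    open scoped MatrixOrder in exact CStarAlgebra.nonneg_iff_eq_star_mul_self.mp hρ.nonneg
  have key : distMeas (Aᴴ * A) (Bᴴ * B) (Wᴴ * W)
      = (Matrix.of fun (ν : (Fin dA × Fin dA') × (Fin dB' × Fin dB) × (Fin dA' × Fin dB'))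
            (rs : Fin dA × Fin dB) => ∑ k' : Fin dA', ∑ l' : Fin dB',
            A ν.1 (rs.1, k') * B ν.2.1 (l', rs.2) * star (W ν.2.2 (k', l')))ᴴ
        * (Matrix.of fun ν rs => ∑ k' : Fin dA', ∑ l' : Fin dB',
            A ν.1 (rs.1, k') * B ν.2.1 (l', rs.2) * star (W ν.2.2 (k', l')) :
            Matrix ((Fin dA × Fin dA') × (Fin dB' × Fin dB) × (Fin dA' × Fin dB'))
              (Fin dA × Fin dB) ℂ) := by
    ext ⟨p, q⟩ ⟨r, s⟩
    simp only [distMeas, Matrix.of_apply, Matrix.mul_apply, Matrix.conjTranspose_apply,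
      star_sum, star_mul', star_star]
    refine Eq.trans (b := ∑ σ : Fin dA × Fin dA', ∑ τ : Fin dB' × Fin dB,
        ∑ m : Fin dA' × Fin dB',
        ∑ k : Fin dA', ∑ l : Fin dB', ∑ k' : Fin dA', ∑ l' : Fin dB',
        (star (A σ (p, k)) * star (B τ (l, q)) * W m (k, l))
          * (A σ (r, k') * B τ (l', s) * star (W m (k', l')))) ?_ (Eq.symm ?_)
    · calc ∑ k : Fin dA', ∑ l : Fin dB', ∑ k' : Fin dA', ∑ l' : Fin dB',
            (∑ σ : Fin dA × Fin dA', star (A σ (p, k)) * A σ (r, k'))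
              * (∑ τ : Fin dB' × Fin dB, star (B τ (l, q)) * B τ (l', s))
              * (∑ m : Fin dA' × Fin dB', star (W m (k', l')) * W m (k, l))
          = ∑ k, ∑ l, ∑ k', ∑ l', ∑ m, ∑ τ, ∑ σ,
              (star (A σ (p, k)) * A σ (r, k'))
                * ((star (B τ (l, q)) * B τ (l', s)) * (star (W m (k', l')) * W m (k, l))) := by
            refine Finset.sum_congr rfl fun k _ => Finset.sum_congr rfl fun l _ =>
              Finset.sum_congr rfl fun k' _ => Finset.sum_congr rfl fun l' _ => ?_
            exact aux_sum_mul_sum_mul_sum _ _ _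
        _ = ∑ σ, ∑ k, ∑ l, ∑ k', ∑ l', ∑ m, ∑ τ, _ := (aux_swap7 _).symm
        _ = ∑ σ, ∑ τ, ∑ k, ∑ l, ∑ k', ∑ l', ∑ m, _ :=
            Finset.sum_congr rfl fun σ _ => (aux_swap6 _).symm
        _ = ∑ σ, ∑ τ, ∑ m, ∑ k, ∑ l, ∑ k', ∑ l',
              (star (A σ (p, k)) * A σ (r, k'))
                * ((star (B τ (l, q)) * B τ (l', s)) * (star (W m (k', l')) * W m (k, l))) :=
            Finset.sum_congr rfl fun σ _ => Finset.sum_congr rfl fun τ _ => (aux_swap5 _).symm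
        _ = ∑ σ : Fin dA × Fin dA', ∑ τ : Fin dB' × Fin dB, ∑ m : Fin dA' × Fin dB',
              ∑ k : Fin dA', ∑ l : Fin dB', ∑ k' : Fin dA', ∑ l' : Fin dB',
              (star (A σ (p, k)) * star (B τ (l, q)) * W m (k, l))
                * (A σ (r, k') * B τ (l', s) * star (W m (k', l'))) := by
            refine Finset.sum_congr rfl fun σ _ => Finset.sum_congr rfl fun τ _ =>
              Finset.sum_congr rfl fun m _ => Finset.sum_congr rfl fun k _ =>
              Finset.sum_congr rfl fun l _ => Finset.sum_congr rfl fun k' _ =>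
              Finset.sum_congr rfl fun l' _ => ?_
            ring
    · rw [Fintype.sum_prod_type]
      refine Finset.sum_congr rfl fun σ _ => ?_
      rw [Fintype.sum_prod_type]
      refine Finset.sum_congr rfl fun τ _ => Finset.sum_congr rfl fun m _ => ?_
      exact aux_sum2_mul_sum2 _ _
  rw [key]
  exact Matrix.posSemidef_conjTranspose_mul_self _

lemma aux_distMeas_rho_add (Ma : Matrix (Fin dA × Fin dA') (Fin dA × Fin dA') ℂ)
    (Mb : Matrix (Fin dB' × Fin dB) (Fin dB' × Fin dB) ℂ) (ρ₁ ρ₂ : BMat dA' dB') :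
    distMeas Ma Mb (ρ₁ + ρ₂) = distMeas Ma Mb ρ₁ + distMeas Ma Mb ρ₂ := by
  ext pq rs
  simp [distMeas, mul_add, Finset.sum_add_distrib]

lemma aux_distMeas_rho_smul (Ma : Matrix (Fin dA × Fin dA') (Fin dA × Fin dA') ℂ)
    (Mb : Matrix (Fin dB' × Fin dB) (Fin dB' × Fin dB) ℂ) (c : ℂ) (ρ : BMat dA' dB') :
    distMeas Ma Mb (c • ρ) = c • distMeas Ma Mb ρ := by
  ext pq rs
  simp only [distMeas, Matrix.smul_apply, Matrix.of_apply, smul_eq_mul, Finset.mul_sum]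
  refine Finset.sum_congr rfl fun _ _ => Finset.sum_congr rfl fun _ _ =>
    Finset.sum_congr rfl fun _ _ => Finset.sum_congr rfl fun _ _ => by ring

/-- `distMeas` as an additive monoid hom in the first argument. -/
def auxDistMeasAHom (Mb : Matrix (Fin dB' × Fin dB) (Fin dB' × Fin dB) ℂ)
    (ρ : BMat dA' dB') : Matrix (Fin dA × Fin dA') (Fin dA × Fin dA') ℂ →+ BMat dA dB where
  toFun Ma := distMeas Ma Mb ρ
  map_zero' := by ext pq rs; simp [distMeas]
  map_add' X Y := by ext pq rs; simp [distMeas, add_mul, Finset.sum_add_distrib]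

/-- `distMeas` as an additive monoid hom in the second argument. -/
def auxDistMeasBHom (Ma : Matrix (Fin dA × Fin dA') (Fin dA × Fin dA') ℂ)
    (ρ : BMat dA' dB') : Matrix (Fin dB' × Fin dB) (Fin dB' × Fin dB) ℂ →+ BMat dA dB where
  toFun Mb := distMeas Ma Mb ρ
  map_zero' := by ext pq rs; simp [distMeas]
  map_add' X Y := by ext pq rs; simp [distMeas, mul_add, add_mul, Finset.sum_add_distrib]

lemma aux_distMeas_one_one {ρ : BMat dA' dB'} (hρ : ρ.trace = 1) :
    distMeas (1 : Matrix (Fin dA × Fin dA') (Fin dA × Fin dA') ℂ)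
      (1 : Matrix (Fin dB' × Fin dB) (Fin dB' × Fin dB) ℂ) ρ = 1 := by
  ext ⟨p, q⟩ ⟨r, s⟩
  simp only [distMeas, Matrix.of_apply, Matrix.one_apply, Prod.mk.injEq, ite_mul, one_mul,
    zero_mul, mul_ite, mul_one, mul_zero]
  by_cases hpr : p = r
  · subst hpr
    by_cases hqs : q = s
    · subst hqs
      simp only [and_true, true_and, if_true, Finset.sum_ite_eq, Finset.mem_univ]
      rw [show ρ.trace = ∑ x : Fin dA', ∑ y : Fin dB', ρ (x, y) (x, y) by
        rw [Matrix.trace, Fintype.sum_prod_type]; rfl] at hρ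
      exact hρ
    · simp [hqs]
  · simp [hpr]

lemma aux_distMeas_povm_sum_one {oA oB : ℕ}
    (Ma : Fin oA → Matrix (Fin dA × Fin dA') (Fin dA × Fin dA') ℂ)
    (Mb : Fin oB → Matrix (Fin dB' × Fin dB) (Fin dB' × Fin dB) ℂ)
    {ρ : BMat dA' dB'} (hMa : ∑ i, Ma i = 1) (hMb : ∑ j, Mb j = 1) (hρ : ρ.trace = 1) :
    ∑ i, ∑ j, distMeas (Ma i) (Mb j) ρ = (1 : BMat dA dB) := by
  have h1 : ∀ i, ∑ j, distMeas (Ma i) (Mb j) ρ = distMeas (Ma i) 1 ρ := fun i => by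
    rw [← hMb]; exact (map_sum (auxDistMeasBHom (Ma i) ρ) Mb Finset.univ).symm
  rw [Finset.sum_congr rfl fun i _ => h1 i,
    show ∑ i, distMeas (Ma i) 1 ρ = distMeas (∑ i, Ma i) 1 ρ from
      (map_sum (auxDistMeasAHom 1 ρ) Ma Finset.univ).symm,
    hMa, aux_distMeas_one_one hρ]
end AuxDistMeas

/-- The effect of a quantum simulation applied to an arbitrary family of matrices. -/
def simFam {dA dB oA oB oA' oB' : ℕ} (nL : ℕ) (pL : Fin nL → ℝ)
    (pA : Fin oA' → Fin oA → Fin nL → ℝ) (pB : Fin oB' → Fin oB → Fin nL → ℝ)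
    (kE : Fin nL → ℕ) (KE : (l : Fin nL) → Fin (kE l) → Mat dA)
    (kN : Fin nL → ℕ) (KN : (l : Fin nL) → Fin (kN l) → Mat dB)
    (M : Fin oA → Fin oB → BMat dA dB) (a : Fin oA') (b : Fin oB') : BMat dA dB :=
  ∑ l : Fin nL, ∑ i : Fin oA, ∑ j : Fin oB,
    ((pL l * pA a i l * pB b j l : ℝ) : ℂ) •
      ∑ s : Fin (kE l), ∑ t : Fin (kN l),
        (KE l s ⊗ₖ KN l t)ᴴ * M i j * (KE l s ⊗ₖ KN l t)

section AuxSimFam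
variable {dA dB oA oB oA' oB' : ℕ} {nL : ℕ} {pL : Fin nL → ℝ}
  {pA : Fin oA' → Fin oA → Fin nL → ℝ} {pB : Fin oB' → Fin oB → Fin nL → ℝ}
  {kE : Fin nL → ℕ} {KE : (l : Fin nL) → Fin (kE l) → Mat dA}
  {kN : Fin nL → ℕ} {KN : (l : Fin nL) → Fin (kN l) → Mat dB}

lemma aux_simFam_psd {M : Fin oA → Fin oB → BMat dA dB} (hM : ∀ i j, (M i j).PosSemidef)
    (hpL : ∀ l, 0 ≤ pL l) (hpA : ∀ a i l, 0 ≤ pA a i l) (hpB : ∀ b j l, 0 ≤ pB b j l)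
    (a : Fin oA') (b : Fin oB') : (simFam nL pL pA pB kE KE kN KN M a b).PosSemidef := by
  refine aux_psd_sum _ _ fun l _ => aux_psd_sum _ _ fun i _ => aux_psd_sum _ _ fun j _ => ?_
  refine aux_psd_smul (aux_psd_sum _ _ fun s _ => aux_psd_sum _ _ fun t _ => ?_) ?_
  · exact (hM i j).conjTranspose_mul_mul_same _
  · have := hpL l; have := hpA a i l; have := hpB b j l; positivity

lemma aux_simFam_combo {M N O : Fin oA → Fin oB → BMat dA dB} {r : ℝ}
    (h : ∀ i j, M i j + (r : ℂ) • N i j = ((1 + r : ℝ) : ℂ) • O i j)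
    (a : Fin oA') (b : Fin oB') :
    simFam nL pL pA pB kE KE kN KN M a b + (r : ℂ) • simFam nL pL pA pB kE KE kN KN N a b
      = ((1 + r : ℝ) : ℂ) • simFam nL pL pA pB kE KE kN KN O a b := by
  simp only [simFam, Finset.smul_sum]
  rw [← Finset.sum_add_distrib]
  refine Finset.sum_congr rfl fun l _ => ?_
  rw [← Finset.sum_add_distrib]
  refine Finset.sum_congr rfl fun i _ => ?_
  rw [← Finset.sum_add_distrib]
  refine Finset.sum_congr rfl fun j _ => ?_
  rw [← Finset.sum_add_distrib]
  refine Finset.sum_congr rfl fun s _ => ?_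
  rw [← Finset.sum_add_distrib]
  refine Finset.sum_congr rfl fun t _ => ?_
  rw [smul_comm ((r : ℝ) : ℂ), smul_comm (((1 + r : ℝ)) : ℂ), ← smul_add]
  congr 1
  have hmove : ∀ (c : ℂ) (X P Q : BMat dA dB), P * (c • X) * Q = c • (P * X * Q) := by
    intros c X P Q; rw [Matrix.mul_smul, Matrix.smul_mul]
  rw [← hmove, ← hmove, ← Matrix.add_mul, ← Matrix.mul_add, h i j]

lemma aux_simFam_sum_one {M : Fin oA → Fin oB → BMat dA dB}
    (hsum : ∑ i, ∑ j, M i j = 1)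
    (hpL : ∑ l, pL l = 1)
    (hpA : ∀ i l, ∑ a, pA a i l = 1) (hpB : ∀ j l, ∑ b, pB b j l = 1)
    (hKE : ∀ l, ∑ s : Fin (kE l), (KE l s)ᴴ * KE l s = 1)
    (hKN : ∀ l, ∑ t : Fin (kN l), (KN l t)ᴴ * KN l t = 1) :
    ∑ a : Fin oA', ∑ b : Fin oB', simFam nL pL pA pB kE KE kN KN M a b = 1 := by
  simp only [simFam]
  rw [aux_swap5 fun a b l i j => ((pL l * pA a i l * pB b j l : ℝ) : ℂ) •
      ∑ s : Fin (kE l), ∑ t : Fin (kN l), (KE l s ⊗ₖ KN l t)ᴴ * M i j * (KE l s ⊗ₖ KN l t)]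
  rw [aux_swap5 fun b l i j a => ((pL l * pA a i l * pB b j l : ℝ) : ℂ) •
      ∑ s : Fin (kE l), ∑ t : Fin (kN l), (KE l s ⊗ₖ KN l t)ᴴ * M i j * (KE l s ⊗ₖ KN l t)]
  have hco : ∀ l i j (C : BMat dA dB),
      (∑ a : Fin oA', ∑ b : Fin oB', ((pL l * pA a i l * pB b j l : ℝ) : ℂ) • C)
        = ((pL l : ℝ) : ℂ) • C := by
    intro l i j C
    have h1 : ∀ a : Fin oA', ∑ b : Fin oB', ((pL l * pA a i l * pB b j l : ℝ) : ℂ) • C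
        = ((pL l * pA a i l : ℝ) : ℂ) • C := fun a => by
      rw [← Finset.sum_smul]
      congr 1
      push_cast
      rw [← Finset.mul_sum]
      norm_cast
      rw [hpB j l, mul_one]
    rw [Finset.sum_congr rfl fun a _ => h1 a, ← Finset.sum_smul]
    congr 1
    push_cast
    rw [← Finset.mul_sum]
    norm_cast
    rw [hpA i l, mul_one]
  rw [Finset.sum_congr rfl fun l _ => Finset.sum_congr rfl fun i _ =>
    Finset.sum_congr rfl fun j _ => hco l i j _]
  have hin : ∀ l : Fin nL, ∑ i : Fin oA, ∑ j : Fin oB, ((pL l : ℝ) : ℂ) •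
      (∑ s : Fin (kE l), ∑ t : Fin (kN l), (KE l s ⊗ₖ KN l t)ᴴ * M i j * (KE l s ⊗ₖ KN l t))
      = ((pL l : ℝ) : ℂ) • (1 : BMat dA dB) := by
    intro l
    have h2 : ∀ i : Fin oA, ∑ j : Fin oB, ((pL l : ℝ) : ℂ) •
        (∑ s : Fin (kE l), ∑ t : Fin (kN l), (KE l s ⊗ₖ KN l t)ᴴ * M i j * (KE l s ⊗ₖ KN l t))
        = ((pL l : ℝ) : ℂ) • ∑ j : Fin oB,
          (∑ s : Fin (kE l), ∑ t : Fin (kN l), (KE l s ⊗ₖ KN l t)ᴴ * M i j * (KE l s ⊗ₖ KN l t)) :=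
      fun i => (Finset.smul_sum).symm
    rw [Finset.sum_congr rfl fun i _ => h2 i, ← Finset.smul_sum]
    congr 1
    rw [aux_swap4 fun i j s t => (KE l s ⊗ₖ KN l t)ᴴ * M i j * (KE l s ⊗ₖ KN l t),
      aux_swap4 fun j s t i => (KE l s ⊗ₖ KN l t)ᴴ * M i j * (KE l s ⊗ₖ KN l t)]
    have h3 : ∀ (s : Fin (kE l)) (t : Fin (kN l)),
        ∑ i : Fin oA, ∑ j : Fin oB, (KE l s ⊗ₖ KN l t)ᴴ * M i j * (KE l s ⊗ₖ KN l t)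
          = ((KE l s)ᴴ * KE l s) ⊗ₖ ((KN l t)ᴴ * KN l t) := by
      intro s t
      have h4 : ∀ i : Fin oA, ∑ j : Fin oB, (KE l s ⊗ₖ KN l t)ᴴ * M i j * (KE l s ⊗ₖ KN l t)
          = (KE l s ⊗ₖ KN l t)ᴴ * (∑ j, M i j) * (KE l s ⊗ₖ KN l t) := fun i => by
        rw [← Finset.sum_mul, ← Finset.mul_sum]
      rw [Finset.sum_congr rfl fun i _ => h4 i, ← Finset.sum_mul, ← Finset.mul_sum, hsum,
        Matrix.mul_one, aux_kroneckerConjTranspose, Matrix.mul_kronecker_mul]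
    rw [Finset.sum_congr rfl fun s _ => Finset.sum_congr rfl fun t _ => h3 s t]
    have h5 : ∀ s : Fin (kE l),
        ∑ t : Fin (kN l), ((KE l s)ᴴ * KE l s) ⊗ₖ ((KN l t)ᴴ * KN l t)
          = ((KE l s)ᴴ * KE l s) ⊗ₖ (1 : Mat dB) := fun s => by
      rw [← aux_kronecker_sum_right, hKN l]
    rw [Finset.sum_congr rfl fun s _ => h5 s, ← aux_sum_kronecker_left, hKE l,
      Matrix.one_kronecker_one]
  rw [Finset.sum_congr rfl fun l _ => hin l, ← Finset.sum_smul]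
  norm_cast
  rw [hpL, one_smul]
end AuxSimFam

section AuxMembership
variable {dA dB oA oB : ℕ}

lemma aux_memRBN_psd {M : Fin oA → Fin oB → BMat dA dB} (h : MemRBN M) :
    ∀ a b, (M a b).PosSemidef := by
  obtain ⟨dA', dB', Ma, Mb, ρ, hMa, hMb, hρ, hrep⟩ := h
  intro a b
  rw [hrep a b]
  exact aux_distMeas_psd (hMa.1 a) (hMb.1 b) hρ.1

lemma aux_memFBN_psd {M : Fin oA → Fin oB → BMat dA dB} (h : MemFBN M) :
    ∀ a b, (M a b).PosSemidef := by
  obtain ⟨dA', dB', Ma, Mb, ρ, hMa, hMb, hρ, _, hrep⟩ := h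
  intro a b
  rw [hrep a b]
  exact aux_distMeas_psd (hMa.1 a) (hMb.1 b) hρ.1

lemma aux_memFBN_sum_one {M : Fin oA → Fin oB → BMat dA dB} (h : MemFBN M) :
    ∑ a, ∑ b, M a b = 1 := by
  obtain ⟨dA', dB', Ma, Mb, ρ, hMa, hMb, hρ, _, hrep⟩ := h
  rw [Finset.sum_congr rfl fun a _ => Finset.sum_congr rfl fun b _ => hrep a b]
  exact aux_distMeas_povm_sum_one Ma Mb hMa.2 hMb.2 hρ.2
end AuxMembership

section AuxValues
variable {dA dB oA oB : ℕ} {p : Fin oA → Fin oB → ℝ} {σ : Fin oA → Fin oB → BMat dA dB}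

lemma aux_val_nonneg (hG : IsEnsemble p σ) {Q : Fin oA → Fin oB → BMat dA dB}
    (hQ : ∀ x y, (Q x y).PosSemidef) :
    0 ≤ ∑ x : Fin oA, ∑ y : Fin oB, p x y * ((Q x y * σ x y).trace).re := by
  refine Finset.sum_nonneg fun x _ => Finset.sum_nonneg fun y _ => ?_
  exact mul_nonneg (hG.1 x y) (aux_trace_mul_psd_re_nonneg (hQ x y) (hG.2.2 x y).1)

lemma aux_val_le_one (hG : IsEnsemble p σ) {Q : Fin oA → Fin oB → BMat dA dB}
    (hQ : ∀ x y, (Q x y).PosSemidef) (hone : ∑ x, ∑ y, Q x y = 1) :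
    ∑ x : Fin oA, ∑ y : Fin oB, p x y * ((Q x y * σ x y).trace).re ≤ 1 := by
  have hone' : ∑ q : Fin oA × Fin oB, Q q.1 q.2 = 1 := by
    rw [Fintype.sum_prod_type]; exact hone
  have hub : ∀ x y, ((Q x y * σ x y).trace).re ≤ 1 := by
    intro x y
    have hrest : ((1 : BMat dA dB) - Q x y).PosSemidef := by
      have hxy : ((x, y) : Fin oA × Fin oB) ∈ Finset.univ := Finset.mem_univ _
      have := Finset.add_sum_erase Finset.univ (fun q : Fin oA × Fin oB => Q q.1 q.2) hxy
      rw [hone'] at this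
      have heq : (1 : BMat dA dB) - Q x y
          = ∑ q ∈ Finset.univ.erase ((x, y) : Fin oA × Fin oB), Q q.1 q.2 := by
        rw [← this]; abel
      rw [heq]
      exact aux_psd_sum _ _ fun q _ => hQ q.1 q.2
    have hm := aux_trace_re_mono (by simpa using hrest) (hG.2.2 x y).1
    rw [Matrix.one_mul] at hm
    have htr : ((σ x y).trace).re = 1 := by rw [(hG.2.2 x y).2]; simp
    calc ((Q x y * σ x y).trace).re ≤ ((σ x y).trace).re := hm
      _ = 1 := htr
  calc ∑ x : Fin oA, ∑ y : Fin oB, p x y * ((Q x y * σ x y).trace).re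
      ≤ ∑ x : Fin oA, ∑ y : Fin oB, p x y :=
        Finset.sum_le_sum fun x _ => Finset.sum_le_sum fun y _ => by
          have h1 := hG.1 x y
          have h2 := hub x y
          nlinarith
    _ = 1 := hG.2.1

lemma aux_pdsd_nonneg (hG : IsEnsemble p σ) {O : Fin oA → Fin oB → BMat dA dB}
    (hO : ∀ a b, (O a b).PosSemidef) : 0 ≤ pDSD p σ O := by
  unfold pDSD
  refine Real.sSup_nonneg fun v hv => ?_
  obtain ⟨Q, ⟨nL, pL, pA, pB, kE, KE, kN, KN, h1, h2, h3, h4, h5, h6, h7, h8, hQ⟩, rfl⟩ := hv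
  have hQ' : ∀ a b, Q a b = simFam nL pL pA pB kE KE kN KN O a b := hQ
  refine aux_val_nonneg hG fun x y => ?_
  rw [hQ' x y]
  exact aux_simFam_psd hO h1 h3 h5 x y

lemma aux_pdsd_val_le_one (hG : IsEnsemble p σ) {O : Fin oA → Fin oB → BMat dA dB}
    (hOpsd : ∀ a b, (O a b).PosSemidef) (hOone : ∑ a, ∑ b, O a b = 1) :
    ∀ v ∈ { v : ℝ | ∃ N : Fin oA → Fin oB → BMat dA dB, Simulates O N ∧
      v = ∑ x : Fin oA, ∑ y : Fin oB, p x y * ((N x y * σ x y).trace).re }, v ≤ 1 := by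
  rintro v ⟨Q, ⟨nL, pL, pA, pB, kE, KE, kN, KN, h1, h2, h3, h4, h5, h6, h7, h8, hQ⟩, rfl⟩
  have hQ' : ∀ a b, Q a b = simFam nL pL pA pB kE KE kN KN O a b := hQ
  have hpsd : ∀ x y, (Q x y).PosSemidef := fun x y => by
    rw [hQ' x y]; exact aux_simFam_psd hOpsd h1 h3 h5 x y
  have hone : ∑ x, ∑ y, Q x y = 1 := by
    rw [Finset.sum_congr rfl fun a _ => Finset.sum_congr rfl fun b _ => hQ' a b]
    exact aux_simFam_sum_one hOone h2 h4 h6 h7 h8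
  exact aux_val_le_one hG hpsd hone

lemma aux_pdsd_le_one (hG : IsEnsemble p σ) {O : Fin oA → Fin oB → BMat dA dB}
    (hOpsd : ∀ a b, (O a b).PosSemidef) (hOone : ∑ a, ∑ b, O a b = 1) :
    pDSD p σ O ≤ 1 :=
  Real.sSup_le (aux_pdsd_val_le_one hG hOpsd hOone) zero_le_one

lemma aux_pdsdc_nonneg (hG : IsEnsemble p σ) : 0 ≤ pDSDc p σ := by
  unfold pDSDc
  refine Real.sSup_nonneg fun w hw => ?_
  obtain ⟨N, hN, rfl⟩ := hw
  exact aux_pdsd_nonneg hG (aux_memFBN_psd hN)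

lemma aux_pdsdc_bdd (hG : IsEnsemble p σ) :
    BddAbove { v : ℝ | ∃ N : Fin oA → Fin oB → BMat dA dB, MemFBN N ∧ v = pDSD p σ N } := by
  refine ⟨1, fun w hw => ?_⟩
  obtain ⟨N, hN, rfl⟩ := hw
  exact aux_pdsd_le_one hG (aux_memFBN_psd hN) (aux_memFBN_sum_one hN)

lemma aux_pdsd_le_pdsdc (hG : IsEnsemble p σ) {O : Fin oA → Fin oB → BMat dA dB}
    (hO : MemFBN O) : pDSD p σ O ≤ pDSDc p σ :=
  le_csSup (aux_pdsdc_bdd hG) ⟨O, hO, rfl⟩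
end AuxValues

lemma aux_robn_set_nonempty {dA dB oA oB : ℕ} {M : Fin oA → Fin oB → BMat dA dB}
    (hM : MemRBN M) :
    { r : ℝ | 0 ≤ r ∧ ∃ (N O : Fin oA → Fin oB → BMat dA dB),
      MemRBN N ∧ MemFBN O ∧
      ∀ a b, M a b + (r : ℂ) • N a b = ((1 + r : ℝ) : ℂ) • O a b }.Nonempty := by
  obtain ⟨dA', dB', Ma, Mb, ρ, hMa, hMb, hρ, hrep⟩ := hM
  have hne : Nonempty (Fin dA' × Fin dB') := by
    by_contra h
    have : IsEmpty (Fin dA' × Fin dB') := not_nonempty_iff.mp h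
    have h0 : ρ.trace = 0 := by
      rw [Matrix.trace]
      simp [Finset.univ_eq_empty]
    rw [hρ.2] at h0
    exact one_ne_zero h0
  have hA1 : 0 < dA' := Fin.pos_iff_nonempty.mpr ⟨(Classical.arbitrary _ : Fin dA' × Fin dB').1⟩
  have hB1 : 0 < dB' := Fin.pos_iff_nonempty.mpr ⟨(Classical.arbitrary _ : Fin dA' × Fin dB').2⟩
  set D : ℕ := dA' * dB' with hD
  have hD1 : 1 ≤ D := Nat.one_le_iff_ne_zero.mpr (by positivity)
  by_cases hDone : D = 1
  · -- trivial ancilla: ρ is the 1×1 identity, hence separable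
    have hA' : dA' = 1 := Nat.eq_one_of_mul_eq_one_right (hD ▸ hDone)
    have hB' : dB' = 1 := Nat.eq_one_of_mul_eq_one_left (hD ▸ hDone)
    subst hA'; subst hB'
    have hρ1 : ρ = 1 := by
      ext i j
      have hsub : Subsingleton (Fin 1 × Fin 1) := inferInstance
      have hij : i = j := Subsingleton.elim i j
      subst hij
      have : ρ.trace = ρ i i := by
        rw [Matrix.trace]
        exact Fintype.sum_subsingleton _ i
      rw [← this, hρ.2, Matrix.one_apply_eq]
    have hsep : SepState ρ := by
      refine ⟨1, fun _ => 1, fun _ => 1, fun _ => 1, fun _ => zero_le_one, by simp, ?_, ?_, ?_⟩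
      · exact fun _ => ⟨Matrix.PosSemidef.one, by simp [Matrix.trace_one]⟩
      · exact fun _ => ⟨Matrix.PosSemidef.one, by simp [Matrix.trace_one]⟩
      · rw [hρ1]
        simp [Matrix.one_kronecker_one]
    refine ⟨0, le_refl 0, M, M, ⟨1, 1, Ma, Mb, ρ, hMa, hMb, hρ, hrep⟩,
      ⟨1, 1, Ma, Mb, ρ, hMa, hMb, hρ, hsep, hrep⟩, fun a b => ?_⟩
    push_cast
    simp
  · -- nontrivial ancilla: mix with the maximally mixed state
    have hD2 : 2 ≤ D := by omega
    set r : ℝ := (D : ℝ) - 1 with hr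
    have hDR : (1 : ℝ) ≤ (D : ℝ) := by exact_mod_cast hD1
    have hr0 : 0 ≤ r := by simp [hr]; linarith
    have hrpos : 0 < r := by
      have : (2 : ℝ) ≤ (D : ℝ) := by exact_mod_cast hD2
      simp [hr]; linarith
    have hDne : (D : ℝ) ≠ 0 := by positivity
    have hcard : (Fintype.card (Fin dA' × Fin dB') : ℝ) = (D : ℝ) := by
      simp [Fintype.card_prod, hD]
    set σs : BMat dA' dB' := (((D : ℝ)⁻¹ : ℝ) : ℂ) • (1 : BMat dA' dB') with hσs
    have hσs_psd : σs.PosSemidef := aux_psd_smul Matrix.PosSemidef.one (by positivity)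
    have hσs_tr : σs.trace = 1 := by
      rw [hσs, Matrix.trace_smul, Matrix.trace_one, smul_eq_mul]
      rw [show (Fintype.card (Fin dA' × Fin dB') : ℂ) = ((D : ℝ) : ℂ) by
        push_cast [Fintype.card_prod, Fintype.card_fin, hD]; ring]
      rw [← Complex.ofReal_mul, inv_mul_cancel₀ hDne, Complex.ofReal_one]
    have hσs_sep : SepState σs := by
      refine ⟨1, fun _ => 1, fun _ => (((dA' : ℝ)⁻¹ : ℝ) : ℂ) • (1 : Mat dA'),
        fun _ => (((dB' : ℝ)⁻¹ : ℝ) : ℂ) • (1 : Mat dB'),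
        fun _ => zero_le_one, by simp, ?_, ?_, ?_⟩
      · refine fun _ => ⟨aux_psd_smul Matrix.PosSemidef.one (by positivity), ?_⟩
        rw [Matrix.trace_smul, Matrix.trace_one, smul_eq_mul]
        rw [show (Fintype.card (Fin dA') : ℂ) = ((dA' : ℝ) : ℂ) by push_cast; simp]
        rw [← Complex.ofReal_mul, inv_mul_cancel₀ (by positivity), Complex.ofReal_one]
      · refine fun _ => ⟨aux_psd_smul Matrix.PosSemidef.one (by positivity), ?_⟩
        rw [Matrix.trace_smul, Matrix.trace_one, smul_eq_mul]
        rw [show (Fintype.card (Fin dB') : ℂ) = ((dB' : ℝ) : ℂ) by push_cast; simp]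
        rw [← Complex.ofReal_mul, inv_mul_cancel₀ (by positivity), Complex.ofReal_one]
      · rw [Finset.sum_const, Finset.card_univ, Fintype.card_fin, one_smul,
          Complex.ofReal_one, one_smul]
        rw [Matrix.smul_kronecker, Matrix.kronecker_smul, Matrix.one_kronecker_one,
          smul_smul, hσs]
        congr 1
        rw [← Complex.ofReal_mul, ← mul_inv]
        congr 1
        congr 1
        push_cast [hD]
        ring
    set η : BMat dA' dB' := ((r⁻¹ : ℝ) : ℂ) • ((1 : BMat dA' dB') - ρ) with hη
    have hη_psd : η.PosSemidef :=
      aux_psd_smul (aux_one_sub_posSemidef hρ.1 hρ.2) (by positivity)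
    have hη_tr : η.trace = 1 := by
      rw [hη, Matrix.trace_smul, Matrix.trace_sub, Matrix.trace_one, hρ.2, smul_eq_mul]
      rw [show (Fintype.card (Fin dA' × Fin dB') : ℂ) - 1 = ((r : ℝ) : ℂ) by
        push_cast [Fintype.card_prod, Fintype.card_fin, hD, hr]; ring]
      rw [← Complex.ofReal_mul, inv_mul_cancel₀ (ne_of_gt hrpos), Complex.ofReal_one]
    have hstate : ρ + (r : ℂ) • η = ((1 + r : ℝ) : ℂ) • σs := by
      rw [hη, smul_smul, ← Complex.ofReal_mul, mul_inv_cancel₀ (ne_of_gt hrpos),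
        Complex.ofReal_one, one_smul, add_sub_cancel, hσs, smul_smul]
      rw [← Complex.ofReal_mul ((1 + r : ℝ)), show (1 + r) * (D : ℝ)⁻¹ = 1 by
        field_simp [hr]; linarith, Complex.ofReal_one, one_smul]
    refine ⟨r, hr0, fun a b => distMeas (Ma a) (Mb b) η,
      fun a b => distMeas (Ma a) (Mb b) σs,
      ⟨dA', dB', Ma, Mb, η, hMa, hMb, ⟨hη_psd, hη_tr⟩, fun a b => rfl⟩,
      ⟨dA', dB', Ma, Mb, σs, hMa, hMb, ⟨hσs_psd, hσs_tr⟩, hσs_sep, fun a b => rfl⟩,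
      fun a b => ?_⟩
    rw [hrep a b, ← aux_distMeas_rho_smul, ← aux_distMeas_rho_add, hstate,
      aux_distMeas_rho_smul]

/-- for every distributed measurement `M ∈ R_BN` and every ensemble,
`p_DSD(G, M) ≤ (1 + RoBN(M)) · p_DSD(G)`. -/
theorem dsd_upper_bound {dA dB oA oB : ℕ}
    (M : Fin oA → Fin oB → BMat dA dB) (hM : MemRBN M)
    (p : Fin oA → Fin oB → ℝ) (σ : Fin oA → Fin oB → BMat dA dB)
    (hG : IsEnsemble p σ) :
    pDSD p σ M ≤ (1 + RoBN M) * pDSDc p σ := by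
  have hc0 := aux_pdsdc_nonneg hG
  have hkey : ∀ r : ℝ, 0 ≤ r →
      (∃ (N O : Fin oA → Fin oB → BMat dA dB), MemRBN N ∧ MemFBN O ∧
        ∀ a b, M a b + (r : ℂ) • N a b = ((1 + r : ℝ) : ℂ) • O a b) →
      pDSD p σ M ≤ (1 + r) * pDSDc p σ := by
    rintro r hr0 ⟨N, O, hN, hO, hrel⟩
    unfold pDSD
    refine Real.sSup_le ?_ (mul_nonneg (by linarith) hc0)
    rintro v ⟨Q, ⟨nL, pL, pA, pB, kE, KE, kN, KN, h1, h2, h3, h4, h5, h6, h7, h8, hQ⟩, rfl⟩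
    have hQ' : ∀ a b, Q a b = simFam nL pL pA pB kE KE kN KN M a b := hQ
    set O' := simFam nL pL pA pB kE KE kN KN O with hO'
    have hsimO : Simulates O O' :=
      ⟨nL, pL, pA, pB, kE, KE, kN, KN, h1, h2, h3, h4, h5, h6, h7, h8, fun a b => rfl⟩
    have hcombo := fun (x : Fin oA) (y : Fin oB) =>
      aux_simFam_combo (nL := nL) (pL := pL) (pA := pA) (pB := pB)
        (kE := kE) (KE := KE) (kN := kN) (KN := KN) hrel x y
    have hterm : ∀ x y, ((Q x y * σ x y).trace).re
        ≤ (1 + r) * ((O' x y * σ x y).trace).re := by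
      intro x y
      have hd : ((1 + r : ℝ) : ℂ) • O' x y - Q x y
          = (r : ℂ) • simFam nL pL pA pB kE KE kN KN N x y := by
        rw [hQ' x y, ← hcombo x y, add_sub_cancel_left]
      have hpsd2 : (((1 + r : ℝ) : ℂ) • O' x y - Q x y).PosSemidef := by
        rw [hd]
        exact aux_psd_smul (aux_simFam_psd (aux_memRBN_psd hN) h1 h3 h5 x y) hr0
      have hmono := aux_trace_re_mono hpsd2 (hG.2.2 x y).1
      rwa [Matrix.smul_mul, Matrix.trace_smul, smul_eq_mul,
        show ((((1 + r : ℝ)) : ℂ) * ((O' x y * σ x y).trace)).re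
          = (1 + r) * ((O' x y * σ x y).trace).re by simp [Complex.mul_re]] at hmono
    have hw : (∑ x : Fin oA, ∑ y : Fin oB, p x y * ((O' x y * σ x y).trace).re)
        ≤ pDSD p σ O := by
      unfold pDSD
      exact le_csSup ⟨1, aux_pdsd_val_le_one hG (aux_memFBN_psd hO) (aux_memFBN_sum_one hO)⟩
        ⟨O', hsimO, rfl⟩
    calc ∑ x : Fin oA, ∑ y : Fin oB, p x y * ((Q x y * σ x y).trace).re
        ≤ ∑ x : Fin oA, ∑ y : Fin oB, p x y * ((1 + r) * ((O' x y * σ x y).trace).re) :=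
          Finset.sum_le_sum fun x _ => Finset.sum_le_sum fun y _ =>
            mul_le_mul_of_nonneg_left (hterm x y) (hG.1 x y)
      _ = (1 + r) * ∑ x : Fin oA, ∑ y : Fin oB, p x y * ((O' x y * σ x y).trace).re := by
          rw [Finset.mul_sum]
          exact Finset.sum_congr rfl fun x _ => by
            rw [Finset.mul_sum]
            exact Finset.sum_congr rfl fun y _ => by ring
      _ ≤ (1 + r) * pDSD p σ O := mul_le_mul_of_nonneg_left hw (by linarith)
      _ ≤ (1 + r) * pDSDc p σ :=
          mul_le_mul_of_nonneg_left (aux_pdsd_le_pdsdc hG hO) (by linarith)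
  obtain ⟨r₀, hr₀⟩ := aux_robn_set_nonempty hM
  obtain ⟨hr₀0, hr₀ex⟩ := hr₀
  rcases eq_or_lt_of_le hc0 with hc | hc
  · have h0 := hkey r₀ hr₀0 hr₀ex
    rw [← hc] at h0 ⊢
    rw [mul_zero] at h0 ⊢
    exact h0
  · have hlb : pDSD p σ M / pDSDc p σ - 1 ≤ RoBN M := by
      unfold RoBN
      refine le_csInf ⟨r₀, hr₀0, hr₀ex⟩ fun r hr => ?_
      obtain ⟨hra, hrb⟩ := hr
      have h1 := hkey r hra hrb
      rw [sub_le_iff_le_add, div_le_iff₀ hc]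
      nlinarith [h1]
    have h3 : pDSD p σ M / pDSDc p σ ≤ 1 + RoBN M := by linarith
    calc pDSD p σ M = (pDSD p σ M / pDSDc p σ) * pDSDc p σ := by field_simp
      _ ≤ (1 + RoBN M) * pDSDc p σ := mul_le_mul_of_nonneg_right h3 (le_of_lt hc)
end
end
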